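/- arXiv:1602.04505 — 3 statements merged into one kernel-verified Lean document; each statement's English description precedes it below -/
import Mathlib

section
/- Every finite simple graph G has a tree decomposition (T,β) of adhesion at most 3 such that for every node t of T the torso G⟦β(t)⟧ is a minor of G and is either quasi-4-connected or a complete graph on at most 4 vertices. -/
variable {V : Type*} {W : Type*}

/-- A separation (Y,S,Z) of a graph: pairwise disjoint sets covering the vertex set,
with no edge between Y and Z. -/
def IsSeparation (G : SimpleGraph V) (Y S Z : Set V) : Prop :=
  Disjoint Y S ∧ Disjoint Y Z ∧ Disjoint S Z ∧ Y ∪ S ∪ Z = Set.univ ∧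
    ∀ y ∈ Y, ∀ z ∈ Z, ¬ G.Adj y z

/-- `G` is `k`-connected: more than `k` vertices and no proper separation of order `< k`. -/
def KConnected (k : ℕ) (G : SimpleGraph V) : Prop :=
  k < Nat.card V ∧
    ∀ Y S Z : Set V, IsSeparation G Y S Z → Y.Nonempty → Z.Nonempty → k ≤ S.ncard

/-- `G` is quasi-4-connected. -/
def Quasi4Connected (G : SimpleGraph V) : Prop :=
  KConnected 3 G ∧
    ∀ Y S Z : Set V, IsSeparation G Y S Z → S.ncard = 3 → Y.ncard ≤ 1 ∨ Z.ncard ≤ 1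

/-- `T` is a `G`-tangle of order `k`. -/
def IsTangle (G : SimpleGraph V) (k : ℕ) (T : Set (Set V × Set V × Set V)) : Prop :=
  (∀ p ∈ T, IsSeparation G p.1 p.2.1 p.2.2 ∧ p.2.1.ncard < k) ∧
  (∀ Y S Z : Set V, IsSeparation G Y S Z → S.ncard < k →
    (Y, S, Z) ∈ T ∨ (Z, S, Y) ∈ T) ∧
  (∀ p₁ ∈ T, ∀ p₂ ∈ T, ∀ p₃ ∈ T,
    (p₁.2.2 ∩ p₂.2.2 ∩ p₃.2.2 : Set V).Nonempty ∨
      ∃ u v : V, G.Adj u v ∧ (u ∈ p₁.2.2 ∨ v ∈ p₁.2.2) ∧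
        (u ∈ p₂.2.2 ∨ v ∈ p₂.2.2) ∧ (u ∈ p₃.2.2 ∨ v ∈ p₃.2.2)) ∧
  (∀ p ∈ T, (p.2.2 : Set V).Nonempty)

/-- The order `⪯` on separations: (Y,S,Z) ⪯ (Y',S',Z') iff S ∪ Z ⊊ S' ∪ Z', or
S ∪ Z = S' ∪ Z' and S ⊆ S'. -/
def SepLE (p q : Set V × Set V × Set V) : Prop :=
  p.2.1 ∪ p.2.2 ⊂ q.2.1 ∪ q.2.2 ∨
    (p.2.1 ∪ p.2.2 = q.2.1 ∪ q.2.2 ∧ p.2.1 ⊆ q.2.1)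

/-- `p` is a `⪯`-minimal element of `T`. -/
def IsMinimalIn (T : Set (Set V × Set V × Set V)) (p : Set V × Set V × Set V) : Prop :=
  p ∈ T ∧ ∀ q ∈ T, SepLE q p → q = p

/-- Two separations are orthogonal. (They cross if they are not orthogonal.) -/
def SepOrthogonal (p q : Set V × Set V × Set V) : Prop :=
  (p.1 ∪ p.2.1) ∩ (q.1 ∪ q.2.1) ⊆ p.2.1 ∩ q.2.1

/-- A separation (Y,S,Z) is degenerate: |Y| = 1 and S is an independent set. -/
def Degenerate (G : SimpleGraph V) (Y S Z : Set V) : Prop :=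
  Y.ncard = 1 ∧ ∀ u ∈ S, ∀ v ∈ S, ¬ G.Adj u v

/-- The neighbourhood N(X): vertices outside X adjacent to a vertex of X. -/
def Nbhd (G : SimpleGraph V) (X : Set V) : Set V :=
  {v | v ∉ X ∧ ∃ u ∈ X, G.Adj u v}

/-- `C` is (the vertex set of) a connected component of `G − X`. -/
def IsCompOutside (G : SimpleGraph V) (X C : Set V) : Prop :=
  C ⊆ Xᶜ ∧ (G.induce C).Connected ∧ ∀ u ∈ C, ∀ v : V, v ∉ X → G.Adj u v → v ∈ C

/-- The torso `G⟦X⟧` of `X` in `G`. -/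
def torso (G : SimpleGraph V) (X : Set V) : SimpleGraph X where
  Adj u v := u ≠ v ∧ (G.Adj (u : V) (v : V) ∨
    ∃ C : Set V, IsCompOutside G X C ∧ (u : V) ∈ Nbhd G C ∧ (v : V) ∈ Nbhd G C)
  symm := by
    constructor
    rintro u v ⟨hne, h | ⟨C, hC, hu, hv⟩⟩
    · exact ⟨hne.symm, Or.inl h.symm⟩
    · exact ⟨hne.symm, Or.inr ⟨C, hC, hv, hu⟩⟩
  loopless := by
    constructor
    intro u h
    exact h.1 rfl

/-- `H` is a minor of `G`. -/
def IsMinor (H : SimpleGraph W) (G : SimpleGraph V) : Prop :=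
  ∃ M : W → Set V,
    (∀ w : W, (G.induce (M w)).Connected) ∧
    (Pairwise fun w w' : W => Disjoint (M w) (M w')) ∧
    ∀ w w' : W, H.Adj w w' → ∃ u ∈ M w, ∃ v ∈ M w', G.Adj u v

/-- `M` is a faithful model of the graph `H` (with vertex set `X ⊆ V(G)`) in `G`. -/
def FaithfulModel (G : SimpleGraph V) (X : Set V) (H : SimpleGraph X)
    (M : X → Set V) : Prop :=
  (∀ w : X, (w : V) ∈ M w) ∧
  (∀ w : X, (G.induce (M w)).Connected) ∧
  (Pairwise fun w w' : X => Disjoint (M w) (M w')) ∧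
  ∀ w w' : X, H.Adj w w' → ∃ u ∈ M w, ∃ v ∈ M w', G.Adj u v

/-- `H` (a graph with vertex set `X ⊆ V(G)`) is a faithful minor of `G`. -/
def IsFaithfulMinor (G : SimpleGraph V) (X : Set V) (H : SimpleGraph X) : Prop :=
  ∃ M : X → Set V, FaithfulModel G X H M

/-- The projection of a separation of `G` to a minor with model `M`. -/
def projSep {X : Set V} (M : X → Set V) (p : Set V × Set V × Set V) :
    Set X × Set X × Set X :=
  ({w : X | M w ⊆ p.1}, {w : X | (M w ∩ p.2.1).Nonempty}, {w : X | M w ⊆ p.2.2})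

/-- The graph TH₊₃: vertices 0,1,2,3 are v₁,v₂,v₃,v₄ (pairwise adjacent); 4,5,6 are
w₁,w₂,w₃ with w₁ ~ v₁,v₂,v₃, w₂ ~ v₁,v₂,v₄, w₃ ~ v₁,v₃,v₄. -/
def TH3 : SimpleGraph (Fin 7) :=
  SimpleGraph.fromRel (fun u v =>
    (u.val < 4 ∧ v.val < 4) ∨
    (u.val = 4 ∧ (v.val = 0 ∨ v.val = 1 ∨ v.val = 2)) ∨
    (u.val = 5 ∧ (v.val = 0 ∨ v.val = 1 ∨ v.val = 3)) ∨
    (u.val = 6 ∧ (v.val = 0 ∨ v.val = 2 ∨ v.val = 3)))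

/-- The graph TR₊₃: vertices 0,1,2 are v₁,v₂,v₃ (pairwise adjacent); 3,4,5 are
w₁,w₂,w₃, each adjacent to each of v₁,v₂,v₃. -/
def TR3 : SimpleGraph (Fin 6) :=
  SimpleGraph.fromRel (fun u v =>
    (u.val < 3 ∧ v.val < 3) ∨ (3 ≤ u.val ∧ v.val < 3))

/-- A graph is exceptional if it embeds (injectively, preserving adjacency)
into TH₊₃ or into TR₊₃. -/
def Exceptional (H : SimpleGraph W) : Prop :=
  (∃ f : W → Fin 7, Function.Injective f ∧ ∀ u v : W, H.Adj u v → TH3.Adj (f u) (f v)) ∨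
  (∃ f : W → Fin 6, Function.Injective f ∧ ∀ u v : W, H.Adj u v → TR3.Adj (f u) (f v))

/-- `X` is a `k`-inseparable set of `G`. -/
def KInseparable (G : SimpleGraph V) (k : ℕ) (X : Set V) : Prop :=
  k < X.ncard ∧
    ¬ ∃ Y S Z : Set V, IsSeparation G Y S Z ∧ S.ncard ≤ k ∧
      (X ∩ Y).Nonempty ∧ (X ∩ Z).Nonempty

/-- A triconnected region: a maximal 2-inseparable set of size ≥ 4. -/
def TriconnectedRegion (G : SimpleGraph V) (R : Set V) : Prop :=
  KInseparable G 2 R ∧ 4 ≤ R.ncard ∧ ∀ R' : Set V, R ⊂ R' → ¬ KInseparable G 2 R'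

/-- `H` is a topological subgraph of `G`. -/
def IsTopologicalSubgraph (H : SimpleGraph W) (G : SimpleGraph V) : Prop :=
  ∃ (φ : W → V) (P : ∀ u v : W, H.Adj u v → G.Walk (φ u) (φ v)),
    Function.Injective φ ∧
    (∀ u v (h : H.Adj u v), (P u v h).IsPath) ∧
    (∀ u v (h : H.Adj u v), P u v h = (P v u h.symm).reverse) ∧
    (∀ u v (h : H.Adj u v), ∀ x ∈ (P u v h).support,
      x ∈ Set.range φ → x = φ u ∨ x = φ v) ∧
    (∀ u v (h : H.Adj u v), ∀ u' v' (h' : H.Adj u' v'), s(u, v) ≠ s(u', v') →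
      ∀ x ∈ (P u v h).support, x ∈ (P u' v' h').support →
        (x = φ u ∨ x = φ v) ∧ (x = φ u' ∨ x = φ v'))

/-- A quasi-4-connected region of a 3-connected graph. -/
def Quasi4Region (G : SimpleGraph V) (R : Set V) : Prop :=
  IsFaithfulMinor G R (torso G R) ∧ Quasi4Connected (torso G R) ∧
    ∀ C : Set V, IsCompOutside G R C → (Nbhd G C).ncard = 3

/-- A split vertex of a separation (Y₀,S₀,Z₀). -/
def SplitVertex (G : SimpleGraph V) (S₀ Z₀ : Set V) (z : V) : Prop :=
  z ∈ Z₀ ∧ ∀ C : Set V, IsCompOutside G (S₀ ∪ {z}) C → (Nbhd G C).ncard = 3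

/-- The graph obtained from `G` by contracting the edge `s₁s₂` onto `s₁`. -/
def contractEdge (G : SimpleGraph V) (s₁ s₂ : V) : SimpleGraph ({s₂}ᶜ : Set V) where
  Adj u v := u ≠ v ∧ (G.Adj (u : V) (v : V) ∨
    ((u : V) = s₁ ∧ G.Adj (v : V) s₂) ∨ ((v : V) = s₁ ∧ G.Adj (u : V) s₂))
  symm := by
    constructor
    rintro u v ⟨hne, h | h | h⟩
    · exact ⟨hne.symm, Or.inl h.symm⟩
    · exact ⟨hne.symm, Or.inr (Or.inr h)⟩
    · exact ⟨hne.symm, Or.inr (Or.inl h)⟩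
  loopless := by
    constructor
    intro u h
    exact h.1 rfl

/-- `s t` are the endvertices of a crossedge of two crossing non-degenerate minimal
separations of the tangle `T`, with `s ∈ S₁` and `t ∈ S₂`. -/
def IsNondegCrossedge (G : SimpleGraph V) (T : Set (Set V × Set V × Set V))
    (s t : V) : Prop :=
  ∃ p q : Set V × Set V × Set V,
    IsMinimalIn T p ∧ IsMinimalIn T q ∧
    ¬ Degenerate G p.1 p.2.1 p.2.2 ∧ ¬ Degenerate G q.1 q.2.1 q.2.2 ∧
    ¬ SepOrthogonal p q ∧ G.Adj s t ∧ p.2.1 ∩ q.1 = {s} ∧ q.2.1 ∩ p.1 = {t}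



open Set

namespace Gq

variable {V : Type*} {G H : SimpleGraph V} {A B : Set V} {u v x y a b : V}

/-- `u` and `v` are joined by a walk all of whose vertices lie in `A`. -/
def LinkedOn (G : SimpleGraph V) (A : Set V) (u v : V) : Prop :=
  ∃ w : G.Walk u v, ∀ x ∈ w.support, x ∈ A

/-- `A` is nonempty and connected in `G`. -/
def ConnOn (G : SimpleGraph V) (A : Set V) : Prop :=
  A.Nonempty ∧ ∀ u ∈ A, ∀ v ∈ A, LinkedOn G A u v

lemma LinkedOn.mem_left (h : LinkedOn G A u v) : u ∈ A := by
  obtain ⟨w, hw⟩ := h; exact hw u w.start_mem_support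

lemma LinkedOn.mem_right (h : LinkedOn G A u v) : v ∈ A := by
  obtain ⟨w, hw⟩ := h; exact hw v w.end_mem_support

lemma linkedOn_refl (hu : u ∈ A) : LinkedOn G A u u :=
  ⟨.nil, by simpa using hu⟩

lemma LinkedOn.symm (h : LinkedOn G A u v) : LinkedOn G A v u := by
  obtain ⟨w, hw⟩ := h
  exact ⟨w.reverse, by intro x hx; rw [SimpleGraph.Walk.support_reverse] at hx
                       exact hw x (List.mem_reverse.1 hx)⟩

lemma LinkedOn.trans (h : LinkedOn G A u v) (h' : LinkedOn G A v y) :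
    LinkedOn G A u y := by
  obtain ⟨w, hw⟩ := h; obtain ⟨w', hw'⟩ := h'
  refine ⟨w.append w', ?_⟩
  intro x hx
  rcases (SimpleGraph.Walk.mem_support_append_iff _ _).1 hx with h | h
  · exact hw x h
  · exact hw' x h

lemma LinkedOn.mono (hAB : A ⊆ B) (h : LinkedOn G A u v) : LinkedOn G B u v := by
  obtain ⟨w, hw⟩ := h; exact ⟨w, fun x hx => hAB (hw x hx)⟩

lemma LinkedOn.cons (hadj : G.Adj u v) (hu : u ∈ A) (h : LinkedOn G A v y) :
    LinkedOn G A u y := by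
  obtain ⟨w, hw⟩ := h
  refine ⟨.cons hadj w, ?_⟩
  intro x hx
  rw [SimpleGraph.Walk.support_cons] at hx
  rcases List.mem_cons.1 hx with hx | hx
  · exact hx ▸ hu
  · exact hw x hx

lemma adj_linkedOn (hadj : G.Adj u v) (hu : u ∈ A) (hv : v ∈ A) : LinkedOn G A u v :=
  LinkedOn.cons hadj hu (linkedOn_refl hv)

lemma connOn_singleton (u : V) : ConnOn G {u} :=
  ⟨⟨u, rfl⟩, by rintro a rfl b rfl; exact linkedOn_refl rfl⟩

lemma ConnOn.union (hA : ConnOn G A) (hB : ConnOn G B)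
    (h : ∃ a ∈ A, ∃ b ∈ B, G.Adj a b ∨ a = b) : ConnOn G (A ∪ B) := by
  obtain ⟨a, ha, b, hb, hab⟩ := h
  have key : LinkedOn G (A ∪ B) a b := by
    rcases hab with hab | rfl
    · exact adj_linkedOn hab (Or.inl ha) (Or.inr hb)
    · exact linkedOn_refl (Or.inl ha)
  refine ⟨⟨a, Or.inl ha⟩, ?_⟩
  have hlA : ∀ u ∈ A, ∀ v ∈ A, LinkedOn G (A ∪ B) u v := fun u hu v hv =>
    (hA.2 u hu v hv).mono subset_union_left
  have hlB : ∀ u ∈ B, ∀ v ∈ B, LinkedOn G (A ∪ B) u v := fun u hu v hv =>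
    (hB.2 u hu v hv).mono subset_union_right
  rintro u (hu | hu) v (hv | hv)
  · exact hlA u hu v hv
  · exact ((hlA u hu a ha).trans key).trans (hlB b hb v hv)
  · exact ((hlB u hu b hb).trans key.symm).trans (hlA a ha v hv)
  · exact hlB u hu v hv

lemma ConnOn.insert_adj (hc : ConnOn G A) (hb : b ∈ A) (hadj : G.Adj a b) :
    ConnOn G (insert a A) := by
  have := (connOn_singleton (G := G) a).union hc ⟨a, rfl, b, hb, Or.inl hadj⟩
  simpa [Set.singleton_union] using this

lemma connOn_pair (hadj : G.Adj a b) : ConnOn G {a, b} := by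
  have := (connOn_singleton (G := G) b).insert_adj rfl hadj
  simpa using this

lemma ConnOn.mem_nonempty (hc : ConnOn G A) : A.Nonempty := hc.1

/-- the support of a walk is a connected set. -/
lemma connOn_support (w : G.Walk u v) : ConnOn G {x | x ∈ w.support} := by
  induction w with
  | nil => simpa using connOn_singleton (G := G) _
  | @cons a b c hadj w ih =>
      have : {x | x ∈ (SimpleGraph.Walk.cons hadj w).support} = insert a {x | x ∈ w.support} := by
        ext x; simp [SimpleGraph.Walk.support_cons]
      rw [this]
      exact ih.insert_adj (by simp) hadj

/-- blow-up of a connected set along connected models. -/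
lemma connOn_biUnion {M : V → Set V} (hA : ConnOn H A)
    (hM : ∀ a ∈ A, ConnOn G (M a))
    (hMe : ∀ a ∈ A, ∀ b ∈ A, H.Adj a b → ∃ x ∈ M a, ∃ y ∈ M b, G.Adj x y) :
    ConnOn G (⋃ a ∈ A, M a) := by
  obtain ⟨a0, ha0⟩ := hA.1
  obtain ⟨x0, hx0⟩ := (hM a0 ha0).1
  refine ⟨⟨x0, Set.mem_biUnion ha0 hx0⟩, ?_⟩
  have main : ∀ {a b : V} (w : H.Walk a b), (∀ x ∈ w.support, x ∈ A) →
      ∀ u ∈ M a, ∀ v ∈ M b, LinkedOn G (⋃ a ∈ A, M a) u v := by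
    intro a b w
    induction w with
    | nil =>
        intro hs u hu v hv
        simp only [SimpleGraph.Walk.support_nil, List.mem_singleton] at hs
        have ha := hs _ rfl
        exact ((hM _ ha).2 u hu v hv).mono (Set.subset_biUnion_of_mem ha)
    | @cons a c b hadj w ih =>
        intro hs u hu v hv
        have ha : a ∈ A := hs a (by simp)
        have hc : c ∈ A := hs c (by simp)
        obtain ⟨x, hx, z, hz, hxz⟩ := hMe a ha c hc hadj
        have h1 : LinkedOn G (⋃ a ∈ A, M a) u x :=
          ((hM a ha).2 u hu x hx).mono (Set.subset_biUnion_of_mem ha)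
        have h2 : LinkedOn G (⋃ a ∈ A, M a) x z :=
          adj_linkedOn hxz (Set.mem_biUnion ha hx) (Set.mem_biUnion hc hz)
        have h3 := ih (fun t ht => hs t (by simp [ht])) z hz v hv
        exact (h1.trans h2).trans h3
  intro u hu v hv
  obtain ⟨a, ha, hu'⟩ := Set.mem_iUnion₂.1 hu
  obtain ⟨b, hb, hv'⟩ := Set.mem_iUnion₂.1 hv
  obtain ⟨w, hw⟩ := hA.2 a ha b hb
  exact main w hw u hu' v hv'

/-- walks of induced subgraphs give LinkedOn. -/
lemma linkedOn_of_induce_walk {u v : ↥A} (w : (G.induce A).Walk u v) :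
    LinkedOn G A (u : V) (v : V) := by
  induction w with
  | nil => exact linkedOn_refl (Subtype.coe_prop _)
  | @cons a c b hadj w ih => exact ih.cons hadj (Subtype.coe_prop a)

lemma induce_reachable_of_linkedOn :
    ∀ {u v : V} (w : G.Walk u v) (_ : ∀ x ∈ w.support, x ∈ A)
      (hu : u ∈ A) (hv : v ∈ A), (G.induce A).Reachable ⟨u, hu⟩ ⟨v, hv⟩ := by
  intro u v w
  induction w with
  | nil => intro _ hu hv; rfl
  | @cons a c b hadj w ih =>
      intro hs hu hv
      have hc : c ∈ A := hs c (by simp)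
      have h1 : (G.induce A).Adj ⟨a, hu⟩ ⟨c, hc⟩ := hadj
      exact h1.reachable.trans (ih (fun t ht => hs t (by simp [ht])) hc hv)

lemma connOn_iff_induce_connected : ConnOn G A ↔ (G.induce A).Connected := by
  constructor
  · rintro ⟨⟨a, ha⟩, h⟩
    rw [SimpleGraph.connected_iff]
    refine ⟨?_, ⟨⟨a, ha⟩⟩⟩
    rintro ⟨u, hu⟩ ⟨v, hv⟩
    obtain ⟨w, hw⟩ := h u hu v hv
    exact induce_reachable_of_linkedOn w hw hu hv
  · intro h
    obtain ⟨⟨a, ha⟩⟩ := h.nonempty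
    refine ⟨⟨a, ha⟩, fun u hu v hv => ?_⟩
    obtain ⟨w⟩ := h.preconnected ⟨u, hu⟩ ⟨v, hv⟩
    exact linkedOn_of_induce_walk w

end Gq


open Set

namespace Gq

variable {V : Type*} {G : SimpleGraph V} {X B C D S : Set V} {u v w x y a b c d : V}

/-- The component of `G - X` containing `v`. -/
def compOf (G : SimpleGraph V) (X : Set V) (v : V) : Set V :=
  {u | u ∉ X ∧ LinkedOn G Xᶜ u v}

lemma mem_compOf_self (hv : v ∉ X) : v ∈ compOf G X v := ⟨hv, linkedOn_refl hv⟩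

lemma compOf_subset : compOf G X v ⊆ Xᶜ := fun _ hu => hu.1

lemma compOf_connOn (hv : v ∉ X) : ConnOn G (compOf G X v) := by
  refine ⟨⟨v, mem_compOf_self hv⟩, ?_⟩
  intro u hu u' hu'
  have key : ∀ z ∈ compOf G X v, LinkedOn G (compOf G X v) z v := by
    intro z hz
    obtain ⟨w, hw⟩ := hz.2
    refine ⟨w, fun t ht => ⟨hw t ht, ?_⟩⟩
    have := (connOn_support w).2 t ht v w.end_mem_support
    exact this.mono (fun r hr => hw r hr)
  exact (key u hu).trans (key u' hu').symm

lemma compOf_closed (hu : u ∈ compOf G X v) (hw : w ∉ X) (hadj : G.Adj u w) :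
    w ∈ compOf G X v :=
  ⟨hw, (adj_linkedOn hadj.symm hw hu.1).trans hu.2⟩

lemma compOf_eq_of_mem (hu : u ∈ compOf G X v) : compOf G X u = compOf G X v := by
  ext z
  exact ⟨fun hz => ⟨hz.1, hz.2.trans hu.2⟩, fun hz => ⟨hz.1, hz.2.trans hu.2.symm⟩⟩

lemma adj_same_comp (hu : u ∉ X) (hv : v ∉ X) (hadj : G.Adj u v) :
    compOf G X u = compOf G X v := by
  have : v ∈ compOf G X u := ⟨hv, adj_linkedOn hadj.symm hv hu⟩
  exact (compOf_eq_of_mem this).symm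

lemma isCompOutside_compOf (hv : v ∉ X) : IsCompOutside G X (compOf G X v) := by
  refine ⟨compOf_subset, connOn_iff_induce_connected.1 (compOf_connOn hv), ?_⟩
  intro u hu z hz hadj
  exact compOf_closed hu hz hadj

lemma comp_connOn' (h : IsCompOutside G X C) : ConnOn G C :=
  connOn_iff_induce_connected.2 h.2.1

lemma comp_nonempty (h : IsCompOutside G X C) : C.Nonempty := (comp_connOn' h).1

lemma comp_mem_of_walk (h : IsCompOutside G X C) :
    ∀ {v u : V} (w : G.Walk v u), (∀ x ∈ w.support, x ∉ X) → v ∈ C → u ∈ C := by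
  intro v u w
  induction w with
  | nil => exact fun _ hv => hv
  | @cons a c b hadj w2 ih =>
      intro hs hv
      have hc : c ∉ X := hs c (by simp)
      exact ih (fun t ht => hs t (by simp [ht])) (h.2.2 a hv c hc hadj)

lemma comp_eq_compOf (h : IsCompOutside G X C) (hv : v ∈ C) :
    C = compOf G X v := by
  ext u
  constructor
  · intro hu
    refine ⟨h.1 hu, ?_⟩
    exact ((comp_connOn' h).2 u hu v hv).mono (fun r hr => h.1 hr)
  · rintro ⟨huX, wlk⟩
    obtain ⟨w, hw⟩ := wlk
    exact comp_mem_of_walk h w.reverse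
      (fun t ht => by rw [SimpleGraph.Walk.support_reverse] at ht
                      exact hw t (List.mem_reverse.1 ht)) hv

lemma mem_Nbhd_iff : v ∈ Nbhd G C ↔ v ∉ C ∧ ∃ u ∈ C, G.Adj u v := Iff.rfl

lemma comp_nbhd_subset (h : IsCompOutside G X C) : Nbhd G C ⊆ X := by
  rintro v ⟨hvC, u, hu, hadj⟩
  by_contra hvX
  exact hvC (h.2.2 u hu v hvX hadj)

/-! ### The region graph -/

/-- The "torso graph of the region `X`", as a graph on all of `V`
(vertices outside `X` are isolated). -/
def regG (G : SimpleGraph V) (X : Set V) : SimpleGraph V where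
  Adj u v := u ≠ v ∧ u ∈ X ∧ v ∈ X ∧ (G.Adj u v ∨
    ∃ C, IsCompOutside G X C ∧ u ∈ Nbhd G C ∧ v ∈ Nbhd G C)
  symm := by
    constructor
    rintro u v ⟨h1, h2, h3, h4⟩
    refine ⟨h1.symm, h3, h2, ?_⟩
    rcases h4 with h | ⟨C, hC, hu, hv⟩
    · exact Or.inl h.symm
    · exact Or.inr ⟨C, hC, hv, hu⟩
  loopless := ⟨fun u h => h.1 rfl⟩

lemma regG_adj : (regG G X).Adj u v ↔ (u ≠ v ∧ u ∈ X ∧ v ∈ X ∧ (G.Adj u v ∨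
    ∃ C, IsCompOutside G X C ∧ u ∈ Nbhd G C ∧ v ∈ Nbhd G C)) := Iff.rfl

lemma regG_adj_of_adj (h : G.Adj u v) (hu : u ∈ X) (hv : v ∈ X) :
    (regG G X).Adj u v := ⟨h.ne, hu, hv, Or.inl h⟩

lemma regG_mem_left (h : (regG G X).Adj u v) : u ∈ X := h.2.1
lemma regG_mem_right (h : (regG G X).Adj u v) : v ∈ X := h.2.2.1

lemma torso_adj_iff {u v : ↥X} : (torso G X).Adj u v ↔ (regG G X).Adj ↑u ↑v := by
  constructor
  · rintro ⟨hne, h⟩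
    exact ⟨Subtype.val_injective.ne hne, u.2, v.2, h⟩
  · rintro ⟨hne, _, _, h⟩
    exact ⟨fun e => hne (by rw [e]), h⟩

lemma regG_univ : regG G (Set.univ : Set V) = G := by
  ext u v
  constructor
  · rintro ⟨hne, -, -, h | ⟨C, hC, hu, hv⟩⟩
    · exact h
    · obtain ⟨z, hz⟩ := comp_nonempty hC
      exact absurd (hC.1 hz) (by simp)
  · intro h
    exact ⟨h.ne, trivial, trivial, Or.inl h⟩

/-! ### Composition -/

lemma comp_absorb (hD : IsCompOutside G B D) (hC : ConnOn G C)
    (hCB : ∀ z ∈ C, z ∉ B) (hint : (C ∩ D).Nonempty) : C ⊆ D := by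
  obtain ⟨x0, hx0C, hx0D⟩ := hint
  intro z hz
  obtain ⟨w, hw⟩ := hC.2 x0 hx0C z hz
  exact comp_mem_of_walk hD w (fun t ht => hCB t (hw t ht)) hx0D

lemma first_entry :
    ∀ {a v : V} (w : G.Walk a v), a ∉ X → v ∈ X →
      ∃ b, b ∈ X ∧ b ∈ Nbhd G (compOf G X a) ∧
        ∃ w' : G.Walk b v, w'.length < w.length ∧ ∀ x ∈ w'.support, x ∈ w.support := by
  intro a v w
  induction w with
  | nil => intro ha hv; exact absurd hv ha
  | @cons a c v hadj w2 ih =>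
      intro ha hv
      by_cases hc : c ∈ X
      · refine ⟨c, hc, ?_, w2, by simp, fun x hx => by simp [hx]⟩
        exact ⟨fun h => (compOf_subset h) hc, a, mem_compOf_self ha, hadj⟩
      · obtain ⟨b, hbX, hbN, w', hlen, hsupp⟩ := ih hc hv
        rw [← adj_same_comp ha hc hadj] at hbN
        refine ⟨b, hbX, hbN, w', ?_, fun x hx => by simp [hsupp x hx]⟩
        calc w'.length < w2.length := hlen
        _ < w2.length + 1 := by omega

lemma walk_project :
    ∀ (n : ℕ) {u v : V} (w : G.Walk u v), w.length ≤ n → (∀ x ∈ w.support, x ∈ D) →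
      u ∈ X → v ∈ X → LinkedOn (regG G X) (D ∩ X) u v := by
  intro n
  induction n with
  | zero =>
      intro u v w hlen hs hu hv
      cases w with
      | nil => exact linkedOn_refl ⟨hs u (by simp), hu⟩
      | cons h w2 => simp at hlen
  | succ n ih =>
      intro u v w hlen hs hu hv
      cases w with
      | nil => exact linkedOn_refl ⟨hs u (by simp), hu⟩
      | @cons _ c _ hadj w2 =>
          have hsupp2 : ∀ x ∈ w2.support, x ∈ D := fun t ht => hs t (by simp [ht])
          by_cases hc : c ∈ X
          · have h1 : (regG G X).Adj u c := regG_adj_of_adj hadj hu hc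
            have hlen2 : w2.length ≤ n := by
              simp only [SimpleGraph.Walk.length_cons] at hlen; omega
            exact (adj_linkedOn (A := D ∩ X) h1 ⟨hs u (by simp), hu⟩ ⟨hs c (by simp), hc⟩).trans
              (ih w2 hlen2 hsupp2 hc hv)
          · obtain ⟨b, hbX, hbN, w', hlen', hsupp'⟩ := first_entry w2 hc hv
            have hbD : b ∈ D := hsupp2 b (hsupp' b w'.start_mem_support)
            have hlen'' : w'.length ≤ n := by
              simp only [SimpleGraph.Walk.length_cons] at hlen; omega
            have tail := ih w' hlen'' (fun t ht => hsupp2 t (hsupp' t ht)) hbX hv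
            by_cases hub : u = b
            · subst hub; exact tail
            · have huN : u ∈ Nbhd G (compOf G X c) := by
                refine ⟨fun h => (compOf_subset h) hu, c, mem_compOf_self hc, hadj.symm⟩
              have h1 : (regG G X).Adj u b :=
                ⟨hub, hu, hbX, Or.inr ⟨compOf G X c, isCompOutside_compOf hc, huN, hbN⟩⟩
              exact (adj_linkedOn (A := D ∩ X) h1 ⟨hs u (by simp), hu⟩ ⟨hbD, hbX⟩).trans tail

lemma same_GB_comp (hBX : B ⊆ X) (hadj : (regG G X).Adj x y) (hx : x ∉ B) (hy : y ∉ B) :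
    y ∈ compOf G B x := by
  obtain ⟨hne, hxX, hyX, h | ⟨C, hC, hxN, hyN⟩⟩ := hadj
  · exact compOf_closed (mem_compOf_self hx) hy h
  · obtain ⟨cx, hcx, hcxadj⟩ := hxN.2
    have hCB : ∀ z ∈ C, z ∉ B := fun z hz hzB => (hC.1 hz) (hBX hzB)
    have hcxD : cx ∈ compOf G B x := compOf_closed (mem_compOf_self hx) (hCB cx hcx) hcxadj.symm
    have hCD : C ⊆ compOf G B x :=
      comp_absorb (isCompOutside_compOf hx) (comp_connOn' hC) hCB ⟨cx, hcx, hcxD⟩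
    obtain ⟨cy, hcy, hcyadj⟩ := hyN.2
    exact compOf_closed (hCD hcy) hy hcyadj

lemma linkedH_same_comp (hBX : B ⊆ X) :
    ∀ {u e : V} (w : (regG G X).Walk u e), (∀ x ∈ w.support, x ∉ B) →
      compOf G B u = compOf G B e := by
  intro u e w
  induction w with
  | nil => exact fun _ => rfl
  | @cons a c b hadj w2 ih =>
      intro hs
      have h1 : c ∈ compOf G B a := same_GB_comp hBX hadj (hs a (by simp)) (hs c (by simp))
      rw [← ih (fun t ht => hs t (by simp [ht]))]
      exact (compOf_eq_of_mem h1).symm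

lemma DX_isComp (hBX : B ⊆ X) (hd : d ∉ B)
    (hne : (compOf G B d ∩ X).Nonempty) :
    IsCompOutside (regG G X) B (compOf G B d ∩ X) := by
  refine ⟨fun z hz => (compOf_subset hz.1 : _), ?_, ?_⟩
  · refine connOn_iff_induce_connected.1 ⟨hne, ?_⟩
    intro u hu v hv
    obtain ⟨w, hw⟩ := (compOf_connOn hd).2 u hu.1 v hv.1
    exact walk_project w.length w le_rfl hw hu.2 hv.2
  · intro u hu z hzB hadj
    refine ⟨?_, regG_mem_right hadj⟩
    have h2 : z ∈ compOf G B u := same_GB_comp hBX hadj (compOf_subset hu.1) hzB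
    rwa [compOf_eq_of_mem hu.1] at h2

lemma entry_nbhd (hBX : B ⊆ X) (hd : d ∉ B) (hne : (compOf G B d ∩ X).Nonempty)
    (huB : u ∈ B) (huN : u ∈ Nbhd G (compOf G B d)) :
    u ∈ Nbhd (regG G X) (compOf G B d ∩ X) := by
  have huX : u ∈ X := hBX huB
  obtain ⟨huD, d', hd'D, hd'adj⟩ := huN
  refine ⟨fun h => huD h.1, ?_⟩
  by_cases hd'X : d' ∈ X
  · exact ⟨d', ⟨hd'D, hd'X⟩, regG_adj_of_adj hd'adj hd'X huX⟩
  · have hCB : ∀ z ∈ compOf G X d', z ∉ B := fun z hz hzB => (compOf_subset hz) (hBX hzB)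
    have hCD : compOf G X d' ⊆ compOf G B d :=
      comp_absorb (isCompOutside_compOf hd) (compOf_connOn hd'X) hCB
        ⟨d', mem_compOf_self hd'X, hd'D⟩
    obtain ⟨x0, hx0⟩ := hne
    obtain ⟨w, hw⟩ := (compOf_connOn hd).2 d' hd'D x0 hx0.1
    obtain ⟨b, hbX, hbN, w', _, hsupp'⟩ := first_entry w hd'X hx0.2
    have hbD : b ∈ compOf G B d := hw b (hsupp' b w'.start_mem_support)
    have hub : u ≠ b := fun h => (hbD.1 : b ∉ B) (h ▸ huB)
    have huNC : u ∈ Nbhd G (compOf G X d') :=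
      ⟨fun h => (compOf_subset h) huX, d', mem_compOf_self hd'X, hd'adj⟩
    exact ⟨b, ⟨hbD, hbX⟩, (⟨fun e => hub e.symm, hbX, huX,
      Or.inr ⟨compOf G X d', isCompOutside_compOf hd'X, hbN, huNC⟩⟩ : (regG G X).Adj b u)⟩

/-- The fundamental composition law: the torso of `B` inside the torso of `X`
is the torso of `B`. -/
theorem regG_comp (hBX : B ⊆ X) : regG (regG G X) B = regG G B := by
  ext u v
  constructor
  · rintro ⟨hne, huB, hvB, h⟩
    refine ⟨hne, huB, hvB, ?_⟩
    rcases h with h | ⟨E, hE, huN, hvN⟩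
    · obtain ⟨hne', huX, hvX, h | ⟨C, hC, huC, hvC⟩⟩ := h
      · exact Or.inl h
      · obtain ⟨cu, hcu, hcuadj⟩ := huC.2
        have hcuB : cu ∉ B := fun h => (hC.1 hcu) (hBX h)
        have hCB : ∀ z ∈ C, z ∉ B := fun z hz hzB => (hC.1 hz) (hBX hzB)
        have hCD : C ⊆ compOf G B cu :=
          comp_absorb (isCompOutside_compOf hcuB) (comp_connOn' hC) hCB
            ⟨cu, hcu, mem_compOf_self hcuB⟩
        obtain ⟨cv, hcv, hcvadj⟩ := hvC.2
        exact Or.inr ⟨compOf G B cu, isCompOutside_compOf hcuB,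
          ⟨fun h => h.1 huB, cu, mem_compOf_self hcuB, hcuadj⟩,
          ⟨fun h => h.1 hvB, cv, hCD hcv, hcvadj⟩⟩
    · obtain ⟨e, heE, headj⟩ := huN.2
      obtain ⟨e', he'E, he'adj⟩ := hvN.2
      have heB : e ∉ B := fun h => (hE.1 heE) h
      have hEsub : E ⊆ compOf G B e := by
        intro z hz
        obtain ⟨w, hw⟩ := (comp_connOn' hE).2 z hz e heE
        have h3 : compOf G B z = compOf G B e :=
          linkedH_same_comp hBX w (fun t ht hB => (hE.1 (hw t ht)) hB)
        rw [← h3]; exact mem_compOf_self (fun h => (hE.1 hz) h)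
      have key : ∀ {z t : V}, z ∈ B → t ∈ compOf G B e → (regG G X).Adj t z →
          z ∈ Nbhd G (compOf G B e) := by
        intro z t hzB htD hadj
        refine ⟨fun h => h.1 hzB, ?_⟩
        obtain ⟨hne2, htX, hzX, h | ⟨C, hC, htC, hzC⟩⟩ := hadj
        · exact ⟨t, htD, h⟩
        · obtain ⟨ct, hct, hctadj⟩ := htC.2
          have hctB : ct ∉ B := fun hh => (hC.1 hct) (hBX hh)
          have hctD : ct ∈ compOf G B e := compOf_closed htD hctB hctadj.symm
          have hCD : C ⊆ compOf G B e :=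
            comp_absorb (isCompOutside_compOf heB) (comp_connOn' hC)
              (fun z' hz' hz'B => (hC.1 hz') (hBX hz'B)) ⟨ct, hct, hctD⟩
          obtain ⟨cz, hcz, hczadj⟩ := hzC.2
          exact ⟨cz, hCD hcz, hczadj⟩
      exact Or.inr ⟨compOf G B e, isCompOutside_compOf heB,
        key huB (mem_compOf_self heB) headj, key hvB (hEsub he'E) he'adj⟩
  · rintro ⟨hne, huB, hvB, h⟩
    refine ⟨hne, huB, hvB, ?_⟩
    rcases h with h | ⟨D, hD, huN, hvN⟩
    · exact Or.inl (regG_adj_of_adj h (hBX huB) (hBX hvB))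
    · obtain ⟨d0, hd0⟩ := comp_nonempty hD
      have hd0B : d0 ∉ B := hD.1 hd0
      have hDeq : D = compOf G B d0 := comp_eq_compOf hD hd0
      by_cases hDX : (D ∩ X).Nonempty
      · rw [hDeq] at hDX huN hvN
        exact Or.inr ⟨compOf G B d0 ∩ X, DX_isComp hBX hd0B hDX,
          entry_nbhd hBX hd0B hDX huB huN, entry_nbhd hBX hd0B hDX hvB hvN⟩
      · have hDXc : D ⊆ Xᶜ := fun z hz hzX => hDX ⟨z, hz, hzX⟩
        have hDcomp : IsCompOutside G X D := by
          refine ⟨hDXc, hD.2.1, ?_⟩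
          intro z hz w' hw'X hadj
          exact hD.2.2 z hz w' (fun hB => hw'X (hBX hB)) hadj
        exact Or.inl ⟨hne, hBX huB, hBX hvB, Or.inr ⟨D, hDcomp, huN, hvN⟩⟩

end Gq


open Set

namespace Gq

variable {V : Type*} {G : SimpleGraph V} {X B C D E S Y Z : Set V} {u v w x y s a b c d : V}
variable {M : V → Set V}

/-- A separation of the region `X`. -/
def RSep (G : SimpleGraph V) (X Y S Z : Set V) : Prop :=
  Y ∪ S ∪ Z = X ∧ Disjoint Y S ∧ Disjoint Y Z ∧ Disjoint S Z ∧
    ∀ y ∈ Y, ∀ z ∈ Z, ¬ (regG G X).Adj y z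

lemma RSep.S_subset (h : RSep G X Y S Z) : S ⊆ X := by
  rw [← h.1]; intro t ht; exact Or.inl (Or.inr ht)

lemma RSep.Y_subset (h : RSep G X Y S Z) : Y ⊆ X := by
  rw [← h.1]; intro t ht; exact Or.inl (Or.inl ht)

lemma RSep.Z_subset (h : RSep G X Y S Z) : Z ⊆ X := by
  rw [← h.1]; intro t ht; exact Or.inr ht

lemma ncard_image_val {A : Set ↥X} : (Subtype.val '' A).ncard = A.ncard :=
  Set.ncard_image_of_injective _ Subtype.val_injective

lemma image_val_union {A B : Set ↥X} :
    (Subtype.val '' (A ∪ B) : Set V) = Subtype.val '' A ∪ Subtype.val '' B :=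
  Set.image_union _ _ _

/-- From a separation of the torso to a separation of the region. -/
lemma rsep_of_torso_sep {Y' S' Z' : Set ↥X} (h : IsSeparation (torso G X) Y' S' Z') :
    RSep G X (Subtype.val '' Y') (Subtype.val '' S') (Subtype.val '' Z') := by
  obtain ⟨h1, h2, h3, h4, h5⟩ := h
  refine ⟨?_, ?_, ?_, ?_, ?_⟩
  · rw [← image_val_union, ← image_val_union, h4]
    exact Subtype.coe_image_univ X
  · exact (Set.disjoint_image_iff Subtype.val_injective).2 h1
  · exact (Set.disjoint_image_iff Subtype.val_injective).2 h2
  · exact (Set.disjoint_image_iff Subtype.val_injective).2 h3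
  · rintro _ ⟨y', hy', rfl⟩ _ ⟨z', hz', rfl⟩ hadj
    exact h5 y' hy' z' hz' (torso_adj_iff.2 hadj)

/-- From a separation of the region to a separation of the torso. -/
lemma torso_sep_of_rsep (h : RSep G X Y S Z) :
    IsSeparation (torso G X) (Subtype.val ⁻¹' Y) (Subtype.val ⁻¹' S)
      (Subtype.val ⁻¹' Z) := by
  obtain ⟨h1, h2, h3, h4, h5⟩ := h
  refine ⟨h2.preimage _, h3.preimage _, h4.preimage _, ?_, ?_⟩
  · ext t
    simp only [Set.mem_union, Set.mem_preimage, Set.mem_univ, iff_true]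
    have : (t : V) ∈ Y ∪ S ∪ Z := by rw [h1]; exact t.2
    simpa using this
  · intro y' hy' z' hz' hadj
    exact h5 _ hy' _ hz' (torso_adj_iff.1 hadj)

lemma ncard_preimage_val (hYX : Y ⊆ X) :
    (Subtype.val ⁻¹' Y : Set ↥X).ncard = Y.ncard := by
  rw [← ncard_image_val (A := (Subtype.val ⁻¹' Y : Set ↥X))]
  congr 1
  rw [Subtype.image_preimage_coe]
  exact Set.inter_eq_self_of_subset_right hYX

lemma nonempty_preimage_val (hYX : Y ⊆ X) (hY : Y.Nonempty) :
    (Subtype.val ⁻¹' Y : Set ↥X).Nonempty := by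
  obtain ⟨t, ht⟩ := hY
  exact ⟨⟨t, hYX ht⟩, ht⟩

/-- Quasi-4-connectivity of the torso from region-level separation facts. -/
lemma q4c_transport [Fintype V] (hX3 : 3 < X.ncard)
    (hmin : ∀ Y S Z, RSep G X Y S Z → Y.Nonempty → Z.Nonempty → 3 ≤ S.ncard)
    (hbal : ∀ Y S Z, RSep G X Y S Z → S.ncard = 3 → Y.ncard ≤ 1 ∨ Z.ncard ≤ 1) :
    Quasi4Connected (torso G X) := by
  constructor
  · constructor
    · rwa [Nat.card_coe_set_eq]
    · intro Y' S' Z' hsep hY' hZ'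
      have := hmin _ _ _ (rsep_of_torso_sep hsep) (hY'.image _) (hZ'.image _)
      rwa [ncard_image_val] at this
  · intro Y' S' Z' hsep hS3
    have := hbal _ _ _ (rsep_of_torso_sep hsep) (by rwa [ncard_image_val])
    rwa [ncard_image_val, ncard_image_val] at this

lemma bad_sep_of_not_q4c [Fintype V] (hnq : ¬ Quasi4Connected (torso G X))
    (hX3 : 3 < X.ncard)
    (hmin : ∀ Y S Z, RSep G X Y S Z → Y.Nonempty → Z.Nonempty → 3 ≤ S.ncard) :
    ∃ Y S Z, RSep G X Y S Z ∧ S.ncard = 3 ∧ 2 ≤ Y.ncard ∧ 2 ≤ Z.ncard := by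
  have hK : KConnected 3 (torso G X) := by
    constructor
    · rwa [Nat.card_coe_set_eq]
    · intro Y' S' Z' hsep hY' hZ'
      have := hmin _ _ _ (rsep_of_torso_sep hsep) (hY'.image _) (hZ'.image _)
      rwa [ncard_image_val] at this
  have : ¬ ∀ Y' S' Z' : Set ↥X, IsSeparation (torso G X) Y' S' Z' → S'.ncard = 3 →
      Y'.ncard ≤ 1 ∨ Z'.ncard ≤ 1 := fun h => hnq ⟨hK, h⟩
  push_neg at this
  obtain ⟨Y', S', Z', hsep, hS3, hY', hZ'⟩ := this
  exact ⟨_, _, _, rsep_of_torso_sep hsep, by rwa [ncard_image_val],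
    by rw [ncard_image_val]; omega, by rw [ncard_image_val]; omega⟩

/-- completeness of the torso. -/
lemma torso_eq_top_iff :
    torso G X = ⊤ ↔ ∀ u ∈ X, ∀ v ∈ X, u ≠ v → (regG G X).Adj u v := by
  constructor
  · intro h u hu v hv hne
    have : (torso G X).Adj ⟨u, hu⟩ ⟨v, hv⟩ := by
      rw [h]; exact Subtype.coe_ne_coe.1 hne
    exact torso_adj_iff.1 this
  · intro h
    ext u v
    simp only [SimpleGraph.top_adj]
    constructor
    · exact fun hadj => hadj.1
    · intro hne
      exact torso_adj_iff.2 (h u u.2 v v.2 (Subtype.val_injective.ne hne))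

lemma q4c_of_top (htop : torso G X = ⊤) (h4 : 4 ≤ X.ncard) :
    Quasi4Connected (torso G X) := by
  have hnosep : ∀ Y' S' Z' : Set ↥X, IsSeparation (torso G X) Y' S' Z' →
      Y'.Nonempty → Z'.Nonempty → False := by
    rintro Y' S' Z' ⟨h1, h2, h3, h4', h5⟩ ⟨y, hy⟩ ⟨z, hz⟩
    have hne : y ≠ z := fun e => (h2.ne_of_mem hy (e ▸ hz)) rfl
    exact h5 y hy z hz (by rw [htop]; exact hne)
  constructor
  · constructor
    · rw [Nat.card_coe_set_eq]; omega
    · intro Y' S' Z' hsep hY' hZ'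
      exact absurd (hnosep _ _ _ hsep hY' hZ') (by simp)
  · intro Y' S' Z' hsep hS3
    by_cases hY' : Y'.Nonempty
    · by_cases hZ' : Z'.Nonempty
      · exact absurd (hnosep _ _ _ hsep hY' hZ') (by simp)
      · right; rw [Set.not_nonempty_iff_eq_empty.1 hZ']; simp
    · left; rw [Set.not_nonempty_iff_eq_empty.1 hY']; simp

/-! ### Region models -/

/-- A faithful model of the region torso inside `G`. -/
def RModel (G : SimpleGraph V) (X : Set V) (M : V → Set V) : Prop :=
  (∀ v ∈ X, v ∈ M v) ∧ (∀ v ∈ X, ConnOn G (M v)) ∧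
  (∀ u ∈ X, ∀ v ∈ X, u ≠ v → Disjoint (M u) (M v)) ∧
  (∀ u ∈ X, ∀ v ∈ X, (regG G X).Adj u v → ∃ a ∈ M u, ∃ b ∈ M v, G.Adj a b)

lemma isMinor_torso_of_RModel (h : RModel G X M) : IsMinor (torso G X) G := by
  refine ⟨fun w => M w, ?_, ?_, ?_⟩
  · exact fun w => connOn_iff_induce_connected.1 (h.2.1 w w.2)
  · intro w w' hne
    exact h.2.2.1 w w.2 w' w'.2 (Subtype.val_injective.ne hne)
  · intro w w' hadj
    exact h.2.2.2 w w.2 w' w'.2 (torso_adj_iff.1 hadj)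

lemma rmodel_trivial : RModel G Set.univ (fun v => {v}) := by
  refine ⟨fun v _ => rfl, fun v _ => connOn_singleton v, ?_, ?_⟩
  · intro u _ v _ hne
    exact Set.disjoint_singleton.2 hne
  · intro u _ v _ hadj
    rw [regG_univ] at hadj
    exact ⟨u, rfl, v, rfl, hadj⟩

/-! ### Components of a region minus a separator -/

lemma compOf_regG_subset (hv : v ∈ X) : compOf (regG G X) S v ⊆ X := by
  rintro u ⟨huS, wlk⟩
  obtain ⟨w, hw⟩ := wlk
  cases w with
  | nil => exact hv
  | cons hadj _ => exact regG_mem_left hadj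

lemma walk_stays_side (hsep : RSep G X Y S Z) :
    ∀ {a b : V} (w : (regG G X).Walk a b), (∀ x ∈ w.support, x ∉ S) → a ∈ Y → b ∈ Y := by
  intro a b w
  induction w with
  | nil => exact fun _ h => h
  | @cons a c b hadj w2 ih =>
      intro hs ha
      have hcX : c ∈ X := regG_mem_right hadj
      have hcS : c ∉ S := hs c (by simp)
      have hc : c ∈ Y := by
        have : c ∈ Y ∪ S ∪ Z := by rw [hsep.1]; exact hcX
        rcases this with (h | h) | h
        · exact h
        · exact absurd h hcS
        · exact absurd hadj (hsep.2.2.2.2 a ha c h)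
      exact ih (fun t ht => hs t (by simp [ht])) hc

lemma comp_subset_side (hsep : RSep G X Y S Z) (hy : y ∈ Y) :
    compOf (regG G X) S y ⊆ Y := by
  rintro u ⟨huS, wlk⟩
  obtain ⟨w, hw⟩ := wlk
  have := walk_stays_side hsep w.reverse
    (fun t ht => by rw [SimpleGraph.Walk.support_reverse] at ht
                    exact hw t (List.mem_reverse.1 ht)) hy
  exact this

lemma nbhd_regG_subset_X (hE : E ⊆ X) : Nbhd (regG G X) E ⊆ X := by
  rintro t ⟨htE, u, hu, hadj⟩
  exact regG_mem_right hadj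

/-- order bound on neighbourhoods of connected pieces, from minimality. -/
lemma nbhd_card_ge {k : ℕ}
    (hmin : ∀ Y S Z, RSep G X Y S Z → Y.Nonempty → Z.Nonempty → k ≤ S.ncard)
    (hE : E.Nonempty) (hEX : E ⊆ X)
    (hout : ∃ t ∈ X, t ∉ E ∧ t ∉ Nbhd (regG G X) E) :
    k ≤ (Nbhd (regG G X) E).ncard := by
  set N := Nbhd (regG G X) E with hN
  have hNX : N ⊆ X := nbhd_regG_subset_X hEX
  refine hmin E N (X \ (E ∪ N)) ⟨?_, ?_, ?_, ?_, ?_⟩ hE ?_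
  · ext t
    constructor
    · rintro ((h | h) | h)
      · exact hEX h
      · exact hNX h
      · exact h.1
    · intro ht
      by_cases h1 : t ∈ E
      · exact Or.inl (Or.inl h1)
      · by_cases h2 : t ∈ N
        · exact Or.inl (Or.inr h2)
        · exact Or.inr ⟨ht, fun h => h.elim h1 h2⟩
  · exact Set.disjoint_left.2 fun t ht ht' => ht'.1 ht
  · exact Set.disjoint_left.2 fun t ht ht' => ht'.2 (Or.inl ht)
  · exact Set.disjoint_left.2 fun t ht ht' => ht'.2 (Or.inr ht)
  · intro a ha z hz hadj
    exact hz.2 (Or.inr ⟨fun hzE => hz.2 (Or.inl hzE), a, ha, hadj⟩)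
  · obtain ⟨t, htX, htE, htN⟩ := hout
    exact ⟨t, htX, fun h => h.elim htE htN⟩

/-- minimality implies every component sees the whole separator. -/
lemma nbhd_comp_eq_sep [Fintype V] (hSX : S ⊆ X)
    (hmin : ∀ Y' S' Z', RSep G X Y' S' Z' → Y'.Nonempty → Z'.Nonempty →
      S.ncard ≤ S'.ncard)
    (hv : v ∈ X) (hvS : v ∉ S) :
    Nbhd (regG G X) (compOf (regG G X) S v) = S := by
  set C := compOf (regG G X) S v with hC
  have hCX : C ⊆ X := compOf_regG_subset hv
  have hCS : C ⊆ Sᶜ := compOf_subset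
  apply Set.Subset.antisymm
  · exact comp_nbhd_subset (isCompOutside_compOf hvS)
  · intro s hs
    by_contra hsN
    have hsep : RSep G X C (S \ {s}) ((X \ (S ∪ C)) ∪ {s}) := by
      refine ⟨?_, ?_, ?_, ?_, ?_⟩
      · ext t
        constructor
        · rintro ((h | h) | (h | h))
          · exact hCX h
          · exact hSX h.1
          · exact h.1
          · exact hSX (h ▸ hs)
        · intro ht
          by_cases h1 : t ∈ C
          · exact Or.inl (Or.inl h1)
          · by_cases h2 : t ∈ S
            · by_cases h3 : t = s
              · exact Or.inr (Or.inr h3)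
              · exact Or.inl (Or.inr ⟨h2, h3⟩)
            · exact Or.inr (Or.inl ⟨ht, fun h => h.elim h2 h1⟩)
      · exact Set.disjoint_left.2 fun t ht ht' => (hCS ht) ht'.1
      · refine Set.disjoint_left.2 fun t ht ht' => ?_
        rcases ht' with h | h
        · exact h.2 (Or.inr ht)
        · exact (hCS ht) (h ▸ hs)
      · refine Set.disjoint_left.2 fun t ht ht' => ?_
        rcases ht' with h | h
        · exact h.2 (Or.inl ht.1)
        · exact ht.2 h
      · rintro a ha z (hz | hz) hadj
        · have hzS : z ∉ S := fun h => hz.2 (Or.inl h)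
          exact hz.2 (Or.inr (compOf_closed ha hzS hadj))
        · exact hsN ⟨fun h => (hCS h) (hz ▸ hs), a, ha, hz ▸ hadj⟩
    have := hmin _ _ _ hsep ⟨v, mem_compOf_self hvS⟩ ⟨s, Or.inr rfl⟩
    have hlt : (S \ {s}).ncard < S.ncard :=
      Set.ncard_diff_singleton_lt_of_mem hs (Set.toFinite S)
    omega

end Gq


open Set

namespace Gq

variable {V : Type*} {G : SimpleGraph V} {Z P : Set V} {u v x y z a b s1 s2 s3 z1 z2 : V}

lemma split_at :
    ∀ {z1 z2 : V} (p : G.Walk z1 z2), p.IsPath → ∀ {y}, y ∈ p.support → y ≠ z1 →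
      ∃ (A1 : Set V) (q : G.Walk y z2), q.IsPath ∧ ConnOn G A1 ∧
        Disjoint A1 {t | t ∈ q.support} ∧
        (A1 ∪ {t | t ∈ q.support} = {t | t ∈ p.support}) ∧
        z1 ∈ A1 ∧ ∃ a ∈ A1, G.Adj a y := by
  intro z1 z2 p
  induction p with
  | nil =>
      intro _ y hy hy1
      rw [SimpleGraph.Walk.support_nil, List.mem_singleton] at hy
      exact absurd hy hy1
  | @cons u c w hadj p ih =>
      intro hp y hy hy1
      by_cases hyc : y = c
      · subst hyc
        refine ⟨{u}, p, hp.of_cons, connOn_singleton u, ?_, ?_, rfl, u, rfl, hadj⟩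
        · refine Set.disjoint_left.2 ?_
          rintro t rfl ht
          exact ((SimpleGraph.Walk.cons_isPath_iff _ _).1 hp).2 ht
        · ext t
          simp [SimpleGraph.Walk.support_cons, Set.singleton_union]
      · have hyp : y ∈ p.support := by
          rw [SimpleGraph.Walk.support_cons] at hy
          rcases List.mem_cons.1 hy with h | h
          · exact absurd h hy1
          · exact h
        obtain ⟨A1, q, hq, hA1c, hdisj, huni, hstart, a, haA, haadj⟩ :=
          ih hp.of_cons hyp hyc
        have huw : u ∉ p.support := ((SimpleGraph.Walk.cons_isPath_iff _ _).1 hp).2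
        have hA1p : A1 ⊆ {t | t ∈ p.support} := by
          rw [← huni]; exact Set.subset_union_left
        refine ⟨insert u A1, q, hq, hA1c.insert_adj hstart hadj, ?_, ?_, Or.inl rfl,
          a, Or.inr haA, haadj⟩
        · refine Set.disjoint_left.2 fun t ht htq => ?_
          rcases Set.mem_insert_iff.1 ht with rfl | ht'
          · have : t ∈ {t' | t' ∈ p.support} := by rw [← huni]; exact Or.inr htq
            exact huw this
          · exact (Set.disjoint_left.1 hdisj ht') htq
        · ext t
          simp only [Set.mem_insert_iff, Set.mem_union, Set.mem_setOf_eq,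
            SimpleGraph.Walk.support_cons, List.mem_cons]
          constructor
          · rintro ((rfl | ht) | ht)
            · exact Or.inl rfl
            · refine Or.inr ?_
              have h2 : t ∈ A1 ∪ {t | t ∈ q.support} := Or.inl ht
              rw [huni] at h2; exact h2
            · refine Or.inr ?_
              have h2 : t ∈ A1 ∪ {t | t ∈ q.support} := Or.inr ht
              rw [huni] at h2; exact h2
          · rintro (rfl | ht)
            · exact Or.inl (Or.inl rfl)
            · have h2 : t ∈ A1 ∪ {t | t ∈ q.support} := by rw [huni]; exact ht
              rcases h2 with h' | h'
              · exact Or.inl (Or.inr h')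
              · exact Or.inr h'

lemma double_attach {p : G.Walk z1 z2} (hp : p.IsPath)
    (hx : x ∈ p.support) (hy : y ∈ p.support) (hxy : x ≠ y) :
    ∃ B1 B2 : Set V, ConnOn G B1 ∧ ConnOn G B2 ∧ Disjoint B1 B2 ∧
      B1 ∪ B2 = {t | t ∈ p.support} ∧ z1 ∈ B1 ∧ z2 ∈ B2 ∧
      (∃ a ∈ B1, ∃ b ∈ B2, G.Adj a b) ∧
      ((x ∈ B1 ∧ y ∈ B2) ∨ (y ∈ B1 ∧ x ∈ B2)) := by
  -- wlog : one of x, y differs from z1; split there first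
  have main : ∀ x' y', x' ∈ p.support → y' ∈ p.support → x' ≠ y' → y' ≠ z1 →
      ∃ B1 B2 : Set V, ConnOn G B1 ∧ ConnOn G B2 ∧ Disjoint B1 B2 ∧
        B1 ∪ B2 = {t | t ∈ p.support} ∧ z1 ∈ B1 ∧ z2 ∈ B2 ∧
        (∃ a ∈ B1, ∃ b ∈ B2, G.Adj a b) ∧
        ((x' ∈ B1 ∧ y' ∈ B2) ∨ (y' ∈ B1 ∧ x' ∈ B2)) := by
    intro x' y' hx' hy' hxy' hy'1
    obtain ⟨A1, q, hq, hA1c, hdisj, huni, hstart, a, haA, haadj⟩ := split_at p hp hy' hy'1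
    by_cases hxA : x' ∈ A1
    · exact ⟨A1, {t | t ∈ q.support}, hA1c, connOn_support q, hdisj, huni, hstart,
        q.end_mem_support, ⟨a, haA, y', q.start_mem_support, haadj⟩,
        Or.inl ⟨hxA, q.start_mem_support⟩⟩
    · have hxq : x' ∈ q.support := by
        have : x' ∈ A1 ∪ {t | t ∈ q.support} := by rw [huni]; exact hx'
        exact this.resolve_left hxA
      obtain ⟨A1', r, hr, hA1'c, hdisj', huni', hstart', a', haA', haadj'⟩ :=
        split_at q hq hxq hxy'
      have hA1'q : A1' ⊆ {t | t ∈ q.support} := by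
        rw [← huni']; exact Set.subset_union_left
      refine ⟨A1 ∪ A1', {t | t ∈ r.support}, ?_, connOn_support r, ?_, ?_, Or.inl hstart,
        r.end_mem_support, ⟨a', Or.inr haA', x', r.start_mem_support, haadj'⟩,
        Or.inr ⟨Or.inr hstart', r.start_mem_support⟩⟩
      · exact hA1c.union hA1'c ⟨a, haA, y', hstart', Or.inl haadj⟩
      · refine Set.disjoint_union_left.2 ⟨?_, hdisj'⟩
        refine Set.disjoint_left.2 fun t ht htr => ?_
        have : t ∈ {t | t ∈ q.support} := by rw [← huni']; exact Or.inr htr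
        exact (Set.disjoint_left.1 hdisj ht) this
      · rw [Set.union_assoc, huni', huni]
  by_cases hy1 : y = z1
  · subst hy1
    obtain ⟨B1, B2, h1, h2, h3, h4, h5, h6, h7, h8⟩ :=
      main y x hy hx (Ne.symm hxy) (fun h => hxy (h ▸ rfl))
    exact ⟨B1, B2, h1, h2, h3, h4, h5, h6, h7, h8.symm⟩
  · exact main x y hx hy hxy hy1

end Gq


open Set

namespace Gq

variable {V : Type*} [Fintype V]

private lemma pair_card_le {Q : Set V} {a b : V} (h : Q ⊆ {a, b}) : Q.ncard ≤ 2 := by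
  refine le_trans (Set.ncard_le_ncard h (Set.toFinite _)) ?_
  refine le_trans (Set.ncard_insert_le a {b}) ?_
  simp

/-- packaging of the rooted-K3 conclusion. -/
def RK3 (G : SimpleGraph V) (Z : Set V) (s1 s2 s3 : V)
    (A1 A2 A3 : Set V) : Prop :=
  s1 ∈ A1 ∧ s2 ∈ A2 ∧ s3 ∈ A3 ∧
  A1 ⊆ Z ∪ {s1} ∧ A2 ⊆ Z ∪ {s2} ∧ A3 ⊆ Z ∪ {s3} ∧
  Disjoint A1 A2 ∧ Disjoint A1 A3 ∧ Disjoint A2 A3 ∧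
  ConnOn G A1 ∧ ConnOn G A2 ∧ ConnOn G A3 ∧
  (∃ a ∈ A1, ∃ b ∈ A2, G.Adj a b) ∧ (∃ a ∈ A1, ∃ b ∈ A3, G.Adj a b) ∧
  (∃ a ∈ A2, ∃ b ∈ A3, G.Adj a b)

lemma assemble {G : SimpleGraph V} {Z B1 B2 B3 : Set V} {s1 s2 s3 : V}
    (hB1 : B1 ⊆ Z) (hB2 : B2 ⊆ Z) (hB3 : B3 ⊆ Z)
    (h1Z : s1 ∉ Z) (h2Z : s2 ∉ Z) (h3Z : s3 ∉ Z)
    (h12 : s1 ≠ s2) (h13 : s1 ≠ s3) (h23 : s2 ≠ s3)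
    (hd12 : Disjoint B1 B2) (hd13 : Disjoint B1 B3) (hd23 : Disjoint B2 B3)
    (hc1 : ConnOn G (insert s1 B1)) (hc2 : ConnOn G (insert s2 B2))
    (hc3 : ConnOn G (insert s3 B3))
    (e12 : ∃ a ∈ insert s1 B1, ∃ b ∈ insert s2 B2, G.Adj a b)
    (e13 : ∃ a ∈ insert s1 B1, ∃ b ∈ insert s3 B3, G.Adj a b)
    (e23 : ∃ a ∈ insert s2 B2, ∃ b ∈ insert s3 B3, G.Adj a b) :
    ∃ A1 A2 A3 : Set V, RK3 G Z s1 s2 s3 A1 A2 A3 := by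
  have hdisj : ∀ (s t : V) (B C : Set V), s ≠ t → s ∉ Z → t ∉ Z → B ⊆ Z → C ⊆ Z →
      Disjoint B C → Disjoint (insert s B) (insert t C) := by
    intro s t B C hst hsZ htZ hBZ hCZ hBC
    refine Set.disjoint_left.2 fun u hu hu' => ?_
    rcases Set.mem_insert_iff.1 hu with rfl | huB
    · rcases Set.mem_insert_iff.1 hu' with h | h
      · exact hst h
      · exact hsZ (hCZ h)
    · rcases Set.mem_insert_iff.1 hu' with rfl | huC
      · exact htZ (hBZ huB)
      · exact (Set.disjoint_left.1 hBC huB) huC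
  refine ⟨insert s1 B1, insert s2 B2, insert s3 B3,
    Set.mem_insert _ _, Set.mem_insert _ _, Set.mem_insert _ _, ?_, ?_, ?_,
    hdisj _ _ _ _ h12 h1Z h2Z hB1 hB2 hd12,
    hdisj _ _ _ _ h13 h1Z h3Z hB1 hB3 hd13,
    hdisj _ _ _ _ h23 h2Z h3Z hB2 hB3 hd23,
    hc1, hc2, hc3, e12, e13, e23⟩
  · rintro t ht
    rcases Set.mem_insert_iff.1 ht with rfl | h
    · exact Or.inr rfl
    · exact Or.inl (hB1 h)
  · rintro t ht
    rcases Set.mem_insert_iff.1 ht with rfl | h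
    · exact Or.inr rfl
    · exact Or.inl (hB2 h)
  · rintro t ht
    rcases Set.mem_insert_iff.1 ht with rfl | h
    · exact Or.inr rfl
    · exact Or.inl (hB3 h)

lemma connOn_insert_singleton {G : SimpleGraph V} (s : V) :
    ConnOn G (insert s (∅ : Set V)) := by
  simpa using connOn_singleton (G := G) s

theorem rootedK3 :
    ∀ (n : ℕ) (G : SimpleGraph V) (Z : Set V) (s1 s2 s3 : V),
      Z.ncard ≤ n →
      ConnOn G Z → s1 ∉ Z → s2 ∉ Z → s3 ∉ Z →
      s1 ≠ s2 → s1 ≠ s3 → s2 ≠ s3 →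
      (∃ z ∈ Z, G.Adj s1 z) → (∃ z ∈ Z, G.Adj s2 z) → (∃ z ∈ Z, G.Adj s3 z) →
      (∀ z ∈ Z, ∀ w, G.Adj z w → w ∈ Z ∨ w = s1 ∨ w = s2 ∨ w = s3) →
      (∀ E, E ⊆ Z → E.Nonempty → 3 ≤ (Nbhd G E).ncard) →
      2 ≤ Z.ncard →
      ∃ A1 A2 A3 : Set V, RK3 G Z s1 s2 s3 A1 A2 A3 := by
  intro n
  induction n with
  | zero =>
      intro G Z s1 s2 s3 hn _ _ _ _ _ _ _ _ _ _ _ _ h2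
      omega
  | succ n ih =>
  intro G Z s1 s2 s3 hn hZconn h1Z h2Z h3Z h12 h13 h23 hn1 hn2 hn3 hclosed hdeg hZ2
  classical
  obtain ⟨za, hzaZ, hadj1⟩ := hn1
  obtain ⟨zb, hzbZ, hadj2⟩ := hn2
  obtain ⟨w0, hw0⟩ := hZconn.2 za hzaZ zb hzbZ
  set p := w0.bypass with hpdef
  have hp : p.IsPath := SimpleGraph.Walk.bypass_isPath w0
  have hPsub : ∀ t ∈ p.support, t ∈ Z := fun t ht =>
    hw0 t (SimpleGraph.Walk.support_bypass_subset w0 ht)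
  set P : Set V := {t | t ∈ p.support} with hPdef
  have hPZ : P ⊆ Z := hPsub
  have hzaP : za ∈ P := p.start_mem_support
  have hzbP : zb ∈ P := p.end_mem_support
  have hPconn : ConnOn G P := connOn_support p
  -- case 1 : s3 has two neighbours on the path
  by_cases hC1 : ∃ x, x ∈ P ∧ ∃ y, y ∈ P ∧ x ≠ y ∧ G.Adj s3 x ∧ G.Adj s3 y
  · obtain ⟨x, hxP, y, hyP, hxy, ha3x, ha3y⟩ := hC1
    obtain ⟨B1, B2, hB1c, hB2c, hBd, hBu, hz1B, hz2B, ⟨ea, heaB, eb, hebB, heab⟩, hplace⟩ :=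
      double_attach hp hxP hyP hxy
    have hBu' : B1 ∪ B2 = P := hBu.trans hPdef.symm
    have hB1P : B1 ⊆ P := by rw [← hBu']; exact Set.subset_union_left
    have hB2P : B2 ⊆ P := by rw [← hBu']; exact Set.subset_union_right
    refine assemble (hB1P.trans hPZ) (hB2P.trans hPZ) (Set.empty_subset _)
      h1Z h2Z h3Z h12 h13 h23 hBd (Set.disjoint_empty _) (Set.disjoint_empty _)
      (hB1c.insert_adj hz1B hadj1) (hB2c.insert_adj hz2B hadj2)
      (connOn_insert_singleton s3)
      ⟨ea, Or.inr heaB, eb, Or.inr hebB, heab⟩ ?_ ?_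
    · rcases hplace with ⟨hx1, hy2⟩ | ⟨hy1, hx2⟩
      · exact ⟨x, Or.inr hx1, s3, Or.inl rfl, ha3x.symm⟩
      · exact ⟨y, Or.inr hy1, s3, Or.inl rfl, ha3y.symm⟩
    · rcases hplace with ⟨hx1, hy2⟩ | ⟨hy1, hx2⟩
      · exact ⟨y, Or.inr hy2, s3, Or.inl rfl, ha3y.symm⟩
      · exact ⟨x, Or.inr hx2, s3, Or.inl rfl, ha3x.symm⟩
  -- case 2 : s3 has a neighbour off the path
  by_cases hC2 : ∃ d, d ∈ Z ∧ d ∉ P ∧ G.Adj s3 d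
  · obtain ⟨d, hdZ, hdP, hadj3d⟩ := hC2
    have hdW : d ∉ (Z \ P)ᶜ := fun h => h ⟨hdZ, hdP⟩
    set D := compOf G ((Z \ P)ᶜ) d with hDdef
    have hDsub : D ⊆ Z \ P := fun t ht => by
      have := compOf_subset ht; simpa using this
    have hdD : d ∈ D := mem_compOf_self hdW
    have hDZ : D ⊆ Z := fun t ht => (hDsub ht).1
    set Q := Nbhd G D with hQdef
    have hQsub : ∀ t ∈ Q, t ∈ P ∨ t = s1 ∨ t = s2 ∨ t = s3 := by
      rintro t ⟨htD, u, huD, hadjut⟩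
      rcases hclosed u (hDZ huD) t hadjut with h | h
      · by_cases htP : t ∈ P
        · exact Or.inl htP
        · exact absurd (compOf_closed huD (fun hc => hc ⟨h, htP⟩) hadjut) htD
      · exact Or.inr h
    have hs3Q : s3 ∈ Q := ⟨fun h => h3Z (hDZ h), d, hdD, hadj3d.symm⟩
    have hQ3 : 3 ≤ Q.ncard := hdeg D hDZ ⟨d, hdD⟩
    have hDconn : ConnOn G D := compOf_connOn hdW
    have hc3D : ConnOn G (insert s3 D) := hDconn.insert_adj hdD hadj3d
    have hDP : Disjoint D P := Set.disjoint_left.2 fun t ht htP => (hDsub ht).2 htP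
    by_cases hQP2 : ∃ x, x ∈ Q ∩ P ∧ ∃ y, y ∈ Q ∩ P ∧ x ≠ y
    · obtain ⟨x, ⟨hxQ, hxP⟩, y, ⟨hyQ, hyP⟩, hxy⟩ := hQP2
      obtain ⟨B1, B2, hB1c, hB2c, hBd, hBu, hz1B, hz2B, ⟨ea, heaB, eb, hebB, heab⟩, hplace⟩ :=
        double_attach hp hxP hyP hxy
      have hBu' : B1 ∪ B2 = P := hBu.trans hPdef.symm
      have hB1P : B1 ⊆ P := by rw [← hBu']; exact Set.subset_union_left
      have hB2P : B2 ⊆ P := by rw [← hBu']; exact Set.subset_union_right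
      obtain ⟨hxD, ux, huxD, hadjx⟩ := hxQ
      obtain ⟨hyD, uy, huyD, hadjy⟩ := hyQ
      refine assemble (hB1P.trans hPZ) (hB2P.trans hPZ) hDZ
        h1Z h2Z h3Z h12 h13 h23 hBd (hDP.symm.mono_left hB1P) (hDP.symm.mono_left hB2P)
        (hB1c.insert_adj hz1B hadj1) (hB2c.insert_adj hz2B hadj2) hc3D
        ⟨ea, Or.inr heaB, eb, Or.inr hebB, heab⟩ ?_ ?_
      · rcases hplace with ⟨hx1, hy2⟩ | ⟨hy1, hx2⟩
        · exact ⟨x, Or.inr hx1, ux, Or.inr huxD, hadjx.symm⟩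
        · exact ⟨y, Or.inr hy1, uy, Or.inr huyD, hadjy.symm⟩
      · rcases hplace with ⟨hx1, hy2⟩ | ⟨hy1, hx2⟩
        · exact ⟨y, Or.inr hy2, uy, Or.inr huyD, hadjy.symm⟩
        · exact ⟨x, Or.inr hx2, ux, Or.inr huxD, hadjx.symm⟩
    · -- Q ∩ P has at most one element
      have hQPsub : ∀ x ∈ Q ∩ P, ∀ y ∈ Q ∩ P, x = y := by
        intro x hx y hy
        by_contra hne
        exact hQP2 ⟨x, hx, y, hy, hne⟩
      by_cases hs1Q : s1 ∈ Q
      · -- config A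
        have hsrc : (Q ∩ P).Nonempty ∨ s2 ∈ Q := by
          by_contra hcon
          push_neg at hcon
          obtain ⟨hQPe, hs2Q⟩ := hcon
          have hsub : Q ⊆ {s1, s3} := by
            intro t ht
            rcases hQsub t ht with h | rfl | rfl | rfl
            · exact absurd (Set.mem_inter ht h) (by simp [hQPe])
            · exact Or.inl rfl
            · exact absurd ht hs2Q
            · exact Or.inr rfl
          have hle := pair_card_le hsub
          omega
        obtain ⟨hs1D, u1, hu1D, hadju1⟩ := hs1Q
        refine assemble (Set.empty_subset _) hPZ hDZ h1Z h2Z h3Z h12 h13 h23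
          (Set.disjoint_empty _).symm (Set.disjoint_empty _).symm hDP.symm
          (connOn_insert_singleton s1) (hPconn.insert_adj hzbP hadj2) hc3D
          ⟨s1, Or.inl rfl, za, Or.inr hzaP, hadj1⟩
          ⟨s1, Or.inl rfl, u1, Or.inr hu1D, hadju1.symm⟩ ?_
        rcases hsrc with ⟨x, hxQ, hxP⟩ | hs2Q
        · obtain ⟨hxD, ux, huxD, hadjx⟩ := hxQ
          exact ⟨x, Or.inr hxP, ux, Or.inr huxD, hadjx.symm⟩
        · obtain ⟨hs2D, u2, hu2D, hadju2⟩ := hs2Q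
          exact ⟨s2, Or.inl rfl, u2, Or.inr hu2D, hadju2.symm⟩
      by_cases hs2Q : s2 ∈ Q
      · -- config B
        have hsrc : (Q ∩ P).Nonempty := by
          by_contra hQPe
          have this : Q ⊆ {s2, s3} := by
            intro t ht
            rcases hQsub t ht with h | rfl | rfl | rfl
            · exact absurd (Set.nonempty_of_mem (Set.mem_inter ht h)) hQPe
            · exact absurd ht hs1Q
            · exact Or.inl rfl
            · exact Or.inr rfl
          have hle := pair_card_le this
          omega
        obtain ⟨x, hxQ, hxP⟩ := hsrc
        obtain ⟨hxD, ux, huxD, hadjx⟩ := hxQ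
        obtain ⟨hs2D, u2, hu2D, hadju2⟩ := hs2Q
        refine assemble hPZ (Set.empty_subset _) hDZ h1Z h2Z h3Z h12 h13 h23
          (Set.disjoint_empty _) hDP.symm (Set.disjoint_empty _).symm
          (hPconn.insert_adj hzaP hadj1) (connOn_insert_singleton s2) hc3D
          ⟨zb, Or.inr hzbP, s2, Or.inl rfl, hadj2.symm⟩
          ⟨x, Or.inr hxP, ux, Or.inr huxD, hadjx.symm⟩
          ⟨s2, Or.inl rfl, u2, Or.inr hu2D, hadju2.symm⟩
      · -- neither s1 nor s2 sees D : contradiction with |Q| ≥ 3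
        exfalso
        by_cases hQPe : (Q ∩ P).Nonempty
        · obtain ⟨x0, hx0⟩ := hQPe
          have : Q ⊆ {x0, s3} := by
            intro t ht
            rcases hQsub t ht with h | rfl | rfl | rfl
            · exact Or.inl (hQPsub t (Set.mem_inter ht h) x0 hx0)
            · exact absurd ht hs1Q
            · exact absurd ht hs2Q
            · exact Or.inr rfl
          have hle := pair_card_le this
          omega
        · have : Q ⊆ {s3, s3} := by
            intro t ht
            rcases hQsub t ht with h | rfl | rfl | rfl
            · exact absurd (Set.nonempty_of_mem (Set.mem_inter ht h)) hQPe
            · exact absurd ht hs1Q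
            · exact absurd ht hs2Q
            · exact Or.inl rfl
          have hle := pair_card_le this
          omega
  · -- case 3 : all neighbours of s3 in Z lie on the path, and there is only one
    obtain ⟨z3, hz3Z, hadj3z⟩ := hn3
    have hz3P : z3 ∈ P := by
      by_contra h
      exact hC2 ⟨z3, hz3Z, h, hadj3z⟩
    have huniq : ∀ z ∈ Z, G.Adj s3 z → z = z3 := by
      intro z hz hadj
      by_contra hne
      have hzP : z ∈ P := by
        by_contra h
        exact hC2 ⟨z, hz, h, hadj⟩
      exact hC1 ⟨z, hzP, z3, hz3P, hne, hadj, hadj3z⟩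
    by_cases hs31 : G.Adj s3 s1
    · refine assemble (Set.empty_subset _) hPZ (Set.empty_subset _)
        h1Z h2Z h3Z h12 h13 h23 (Set.disjoint_empty _).symm (Set.disjoint_empty _)
        (Set.disjoint_empty _) (connOn_insert_singleton s1)
        (hPconn.insert_adj hzbP hadj2) (connOn_insert_singleton s3)
        ⟨s1, Or.inl rfl, za, Or.inr hzaP, hadj1⟩
        ⟨s1, Or.inl rfl, s3, Or.inl rfl, hs31.symm⟩
        ⟨z3, Or.inr hz3P, s3, Or.inl rfl, hadj3z.symm⟩
    by_cases hs32 : G.Adj s3 s2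
    · refine assemble hPZ (Set.empty_subset _) (Set.empty_subset _)
        h1Z h2Z h3Z h12 h13 h23 (Set.disjoint_empty _) (Set.disjoint_empty _)
        (Set.disjoint_empty _) (hPconn.insert_adj hzaP hadj1)
        (connOn_insert_singleton s2) (connOn_insert_singleton s3)
        ⟨zb, Or.inr hzbP, s2, Or.inl rfl, hadj2.symm⟩
        ⟨z3, Or.inr hz3P, s3, Or.inl rfl, hadj3z.symm⟩
        ⟨s2, Or.inl rfl, s3, Or.inl rfl, hs32.symm⟩
    -- case 5 : the pendant configuration
    · obtain ⟨t0, ht0Z, ht0ne⟩ := Set.exists_ne_of_one_lt_ncard (s := Z) (by omega) z3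
      have ht0W : t0 ∉ (Z \ {z3})ᶜ := fun h => h ⟨ht0Z, ht0ne⟩
      have hNsub : ∀ t, t ∈ Z \ {z3} →
          Nbhd G (compOf G ((Z \ {z3})ᶜ) t) ⊆ {z3, s1, s2} := by
        rintro t ht v ⟨hvE, u, huE, hadjuv⟩
        have huZ' : u ∈ Z \ {z3} := by simpa using compOf_subset huE
        rcases hclosed u huZ'.1 v hadjuv with h | rfl | rfl | rfl
        · by_cases hvz3 : v = z3
          · exact Or.inl hvz3
          · exact absurd (compOf_closed huE (fun hc => hc ⟨h, hvz3⟩) hadjuv) hvE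
        · exact Or.inr (Or.inl rfl)
        · exact Or.inr (Or.inr rfl)
        · exact absurd (huniq u huZ'.1 hadjuv.symm) huZ'.2
      have htriple : ({z3, s1, s2} : Set V).ncard = 3 := by
        rw [Set.ncard_insert_of_notMem (by
          rintro (rfl | rfl)
          exacts [h1Z hz3Z, h2Z hz3Z]) (Set.toFinite _), Set.ncard_pair h12]
      have hNeq : ∀ t, t ∈ Z \ {z3} →
          Nbhd G (compOf G ((Z \ {z3})ᶜ) t) = {z3, s1, s2} := by
        intro t ht
        refine Set.eq_of_subset_of_ncard_le (hNsub t ht) ?_ (Set.toFinite _)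
        rw [htriple]
        refine hdeg _ (fun x hx => ?_) ⟨t, mem_compOf_self (X := (Z \ {z3})ᶜ) (fun h => h ht)⟩
        exact (show x ∈ Z \ {z3} by simpa using compOf_subset hx).1
      set E0 := compOf G ((Z \ {z3})ᶜ) t0 with hE0def
      have hE0sub : E0 ⊆ Z \ {z3} := fun x hx => by simpa using compOf_subset hx
      have hE0Z : E0 ⊆ Z := fun x hx => (hE0sub hx).1
      have ht0E : t0 ∈ E0 := mem_compOf_self ht0W
      have hNE0 := hNeq t0 ⟨ht0Z, ht0ne⟩
      have hz3N : z3 ∈ Nbhd G E0 := by rw [hNE0]; exact Or.inl rfl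
      have hs1N : s1 ∈ Nbhd G E0 := by rw [hNE0]; exact Or.inr (Or.inl rfl)
      have hs2N : s2 ∈ Nbhd G E0 := by rw [hNE0]; exact Or.inr (Or.inr rfl)
      obtain ⟨hz3E, uz, huzE, hadjuz⟩ := hz3N
      obtain ⟨hs1E, u1, hu1E, hadju1⟩ := hs1N
      obtain ⟨hs2E, u2, hu2E, hadju2⟩ := hs2N
      have hE0conn : ConnOn G E0 := compOf_connOn ht0W
      have hdE0z3 : Disjoint E0 {z3} :=
        Set.disjoint_left.2 fun x hx (h : x = z3) => (hE0sub hx).2 h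
      by_cases htwo : ∃ t', t' ∈ Z \ {z3} ∧ t' ∉ E0
      · obtain ⟨t', ht', ht'E0⟩ := htwo
        set E1 := compOf G ((Z \ {z3})ᶜ) t' with hE1def
        have hE1sub : E1 ⊆ Z \ {z3} := fun x hx => by simpa using compOf_subset hx
        have hNE1 := hNeq t' ht'
        have hz3N1 : z3 ∈ Nbhd G E1 := by rw [hNE1]; exact Or.inl rfl
        have hs2N1 : s2 ∈ Nbhd G E1 := by rw [hNE1]; exact Or.inr (Or.inr rfl)
        obtain ⟨hz3E1, vz, hvzE1, hadjvz⟩ := hz3N1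
        obtain ⟨hs2E1, v2, hv2E1, hadjv2⟩ := hs2N1
        have hE01 : Disjoint E0 E1 := by
          refine Set.disjoint_left.2 fun x hx hx' => ht'E0 ?_
          have e1 : compOf G ((Z \ {z3})ᶜ) x = compOf G ((Z \ {z3})ᶜ) t0 :=
            compOf_eq_of_mem (hE0def ▸ hx)
          have e2 : compOf G ((Z \ {z3})ᶜ) x = compOf G ((Z \ {z3})ᶜ) t' :=
            compOf_eq_of_mem (hE1def ▸ hx')
          rw [hE0def, ← e1, e2]
          exact mem_compOf_self (X := (Z \ {z3})ᶜ) (fun h => h ht')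
        refine assemble hE0Z (fun x hx => (hE1sub hx).1)
          (Set.singleton_subset_iff.2 hz3Z) h1Z h2Z h3Z h12 h13 h23
          hE01 (hdE0z3) (Set.disjoint_left.2 fun x hx (h : x = z3) => (hE1sub hx).2 h)
          (hE0conn.insert_adj hu1E hadju1.symm)
          ((compOf_connOn (G := G) (X := (Z \ {z3})ᶜ) (v := t') (fun h => h ht')).insert_adj hv2E1 hadjv2.symm)
          (by simpa using connOn_pair hadj3z)
          ⟨u2, Or.inr hu2E, s2, Or.inl rfl, hadju2⟩
          ⟨uz, Or.inr huzE, z3, Or.inr rfl, hadjuz⟩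
          ⟨vz, Or.inr hvzE1, z3, Or.inr rfl, hadjvz⟩
      · -- single component
        have hall : ∀ t', t' ∈ Z \ {z3} → t' ∈ E0 := by
          intro t' ht'
          by_contra h
          exact htwo ⟨t', ht', h⟩
        by_cases hs2p : G.Adj s2 z3
        · refine assemble hE0Z (Set.empty_subset _) (Set.singleton_subset_iff.2 hz3Z)
            h1Z h2Z h3Z h12 h13 h23 (Set.disjoint_empty _) hdE0z3
            (Set.disjoint_empty _).symm
            (hE0conn.insert_adj hu1E hadju1.symm) (connOn_insert_singleton s2)
            (by simpa using connOn_pair hadj3z)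
            ⟨u2, Or.inr hu2E, s2, Or.inl rfl, hadju2⟩
            ⟨uz, Or.inr huzE, z3, Or.inr rfl, hadjuz⟩
            ⟨s2, Or.inl rfl, z3, Or.inr rfl, hs2p⟩
        by_cases hs1p : G.Adj s1 z3
        · refine assemble (Set.empty_subset _) hE0Z (Set.singleton_subset_iff.2 hz3Z)
            h1Z h2Z h3Z h12 h13 h23 (Set.disjoint_empty _).symm
            (Set.disjoint_empty _).symm hdE0z3
            (connOn_insert_singleton s1) (hE0conn.insert_adj hu2E hadju2.symm)
            (by simpa using connOn_pair hadj3z)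
            ⟨s1, Or.inl rfl, u1, Or.inr hu1E, hadju1.symm⟩
            ⟨s1, Or.inl rfl, z3, Or.inr rfl, hs1p⟩
            ⟨uz, Or.inr huzE, z3, Or.inr rfl, hadjuz⟩
        · -- recurse into E0 with terminals s1 s2 z3
          have hz3nbrs : Nbhd G {z3} ⊆ E0 ∪ {s3} := by
            rintro v ⟨hvz, u, hu, hadjzv⟩
            have huz : u = z3 := hu
            rw [huz] at hadjzv
            rcases hclosed z3 hz3Z v hadjzv with h | rfl | rfl | rfl
            · have hvne : v ≠ z3 := fun h' => hvz (h' ▸ rfl)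
              exact Or.inl (hall v ⟨h, hvne⟩)
            · exact absurd hadjzv.symm hs1p
            · exact absurd hadjzv.symm hs2p
            · exact Or.inr rfl
          have hE02 : 2 ≤ E0.ncard := by
            by_contra h
            push_neg at h
            have h1 : (Nbhd G {z3}).ncard ≤ E0.ncard + 1 := by
              have ha := Set.ncard_le_ncard hz3nbrs (Set.toFinite _)
              have hb := Set.ncard_union_le E0 ({s3} : Set V)
              simp only [Set.ncard_singleton] at hb
              omega
            have h2 := hdeg {z3} (Set.singleton_subset_iff.2 hz3Z) ⟨z3, rfl⟩
            omega
          have hz3nbrE : ∃ z ∈ E0, G.Adj z3 z := by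
            obtain ⟨b, hbN, hbne⟩ :=
              Set.exists_ne_of_one_lt_ncard (s := Nbhd G {z3}) (by
                have := hdeg {z3} (Set.singleton_subset_iff.2 hz3Z) ⟨z3, rfl⟩
                omega) s3
            rcases hz3nbrs hbN with h | h
            · obtain ⟨_, u, hu, hadj⟩ := hbN
              have huz : u = z3 := hu
              rw [huz] at hadj
              exact ⟨b, h, hadj⟩
            · exact absurd h hbne
          have hE0lt : E0.ncard ≤ n := by
            have : E0.ncard < Z.ncard :=
              Set.ncard_lt_ncard ⟨hE0Z, fun h => (hE0sub (h hz3Z)).2 rfl⟩ (Set.toFinite _)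
            omega
          have hclosed' : ∀ z ∈ E0, ∀ w, G.Adj z w → w ∈ E0 ∨ w = s1 ∨ w = s2 ∨ w = z3 := by
            intro z hz w hadj
            by_cases hwE : w ∈ E0
            · exact Or.inl hwE
            · have : w ∈ Nbhd G E0 := ⟨hwE, z, hz, hadj⟩
              rw [hNE0] at this
              rcases this with rfl | rfl | rfl
              · exact Or.inr (Or.inr (Or.inr rfl))
              · exact Or.inr (Or.inl rfl)
              · exact Or.inr (Or.inr (Or.inl rfl))
          have hz3E0 : z3 ∉ E0 := fun h => (hE0sub h).2 rfl
          obtain ⟨A1', A2', A3', m1, m2, m3, su1, su2, su3, d12, d13, d23,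
            c1, c2, c3, f12, f13, f23⟩ :=
            ih G E0 s1 s2 z3 hE0lt hE0conn (fun h => h1Z (hE0Z h))
              (fun h => h2Z (hE0Z h)) hz3E0 h12
              (fun h => h1Z (h ▸ hz3Z)) (fun h => h2Z (h ▸ hz3Z))
              ⟨u1, hu1E, hadju1.symm⟩ ⟨u2, hu2E, hadju2.symm⟩ hz3nbrE
              hclosed' (fun E hE hEne => hdeg E (hE.trans hE0Z) hEne) hE02
          refine ⟨A1', A2', insert s3 A3', m1, m2, Set.mem_insert _ _, ?_, ?_, ?_,
            d12, ?_, ?_, c1, c2, c3.insert_adj m3 hadj3z, f12, ?_, ?_⟩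
          · exact su1.trans (Set.union_subset_union_left _ hE0Z)
          · exact su2.trans (Set.union_subset_union_left _ hE0Z)
          · intro x hx
            rcases Set.mem_insert_iff.1 hx with rfl | h
            · exact Or.inr rfl
            · rcases su3 h with h' | h'
              · exact Or.inl (hE0Z h')
              · exact Or.inl ((h' : x = z3) ▸ hz3Z)
          · refine Set.disjoint_left.2 fun x hx hx' => ?_
            rcases Set.mem_insert_iff.1 hx' with h'' | h
            · rcases su1 hx with h' | h'
              · exact h3Z (hE0Z (h'' ▸ h'))
              · exact h13 ((h''.symm.trans (h' : x = s1))).symm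
            · exact (Set.disjoint_left.1 d13 hx) h
          · refine Set.disjoint_left.2 fun x hx hx' => ?_
            rcases Set.mem_insert_iff.1 hx' with h'' | h
            · rcases su2 hx with h' | h'
              · exact h3Z (hE0Z (h'' ▸ h'))
              · exact h23 ((h''.symm.trans (h' : x = s2))).symm
            · exact (Set.disjoint_left.1 d23 hx) h
          · obtain ⟨a, ha, b, hb, hab⟩ := f13
            exact ⟨a, ha, b, Set.mem_insert_of_mem _ hb, hab⟩
          · obtain ⟨a, ha, b, hb, hab⟩ := f23
            exact ⟨a, ha, b, Set.mem_insert_of_mem _ hb, hab⟩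

end Gq


open Set

namespace Gq

variable {α : Type} {β : Type} {TA : SimpleGraph α} {TB : SimpleGraph β} {a0 : α} {b0 : β}

attribute [local instance] Classical.decEq

/-- Attach two graphs by a single edge between `a0` and `b0`. -/
def attachT (TA : SimpleGraph α) (TB : SimpleGraph β) (a0 : α) (b0 : β) :
    SimpleGraph (α ⊕ β) where
  Adj x y :=
    (∃ u v, x = Sum.inl u ∧ y = Sum.inl v ∧ TA.Adj u v) ∨
    (∃ u v, x = Sum.inr u ∧ y = Sum.inr v ∧ TB.Adj u v) ∨
    (x = Sum.inl a0 ∧ y = Sum.inr b0) ∨ (x = Sum.inr b0 ∧ y = Sum.inl a0)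
  symm := by
    constructor
    rintro x y (⟨u, v, rfl, rfl, h⟩ | ⟨u, v, rfl, rfl, h⟩ | ⟨rfl, rfl⟩ | ⟨rfl, rfl⟩)
    · exact Or.inl ⟨v, u, rfl, rfl, h.symm⟩
    · exact Or.inr (Or.inl ⟨v, u, rfl, rfl, h.symm⟩)
    · exact Or.inr (Or.inr (Or.inr ⟨rfl, rfl⟩))
    · exact Or.inr (Or.inr (Or.inl ⟨rfl, rfl⟩))
  loopless := by
    constructor
    rintro x (⟨u, v, rfl, h2, h⟩ | ⟨u, v, rfl, h2, h⟩ | ⟨rfl, h2⟩ | ⟨rfl, h2⟩)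
    · rw [Sum.inl.injEq] at h2; exact h.ne h2
    · rw [Sum.inr.injEq] at h2; exact h.ne h2
    · exact absurd h2 (by simp)
    · exact absurd h2 (by simp)

lemma attachT_adj_inl_inl {u v : α} :
    (attachT TA TB a0 b0).Adj (Sum.inl u) (Sum.inl v) ↔ TA.Adj u v := by
  constructor
  · rintro (⟨u', v', h1, h2, h⟩ | ⟨u', v', h1, h2, h⟩ | ⟨h1, h2⟩ | ⟨h1, h2⟩)
    · rw [Sum.inl.injEq] at h1 h2; rwa [h1, h2]
    · exact absurd h1 (by simp)
    · exact absurd h2 (by simp)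
    · exact absurd h1 (by simp)
  · intro h; exact Or.inl ⟨u, v, rfl, rfl, h⟩

lemma attachT_adj_inr_inr {u v : β} :
    (attachT TA TB a0 b0).Adj (Sum.inr u) (Sum.inr v) ↔ TB.Adj u v := by
  constructor
  · rintro (⟨u', v', h1, h2, h⟩ | ⟨u', v', h1, h2, h⟩ | ⟨h1, h2⟩ | ⟨h1, h2⟩)
    · exact absurd h1 (by simp)
    · rw [Sum.inr.injEq] at h1 h2; rwa [h1, h2]
    · exact absurd h1 (by simp)
    · exact absurd h2 (by simp)
  · intro h; exact Or.inr (Or.inl ⟨u, v, rfl, rfl, h⟩)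

lemma attachT_adj_inl_inr {u : α} {v : β} :
    (attachT TA TB a0 b0).Adj (Sum.inl u) (Sum.inr v) ↔ u = a0 ∧ v = b0 := by
  constructor
  · rintro (⟨u', v', h1, h2, h⟩ | ⟨u', v', h1, h2, h⟩ | ⟨h1, h2⟩ | ⟨h1, h2⟩)
    · exact absurd h2 (by simp)
    · exact absurd h1 (by simp)
    · rw [Sum.inl.injEq] at h1; rw [Sum.inr.injEq] at h2; exact ⟨h1, h2⟩
    · exact absurd h1 (by simp)
  · rintro ⟨rfl, rfl⟩; exact Or.inr (Or.inr (Or.inl ⟨rfl, rfl⟩))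

/-- the inclusion homomorphisms -/
def homInl (TA : SimpleGraph α) (TB : SimpleGraph β) (a0 : α) (b0 : β) :
    TA →g attachT TA TB a0 b0 :=
  ⟨Sum.inl, fun h => Or.inl ⟨_, _, rfl, rfl, h⟩⟩

def homInr (TA : SimpleGraph α) (TB : SimpleGraph β) (a0 : α) (b0 : β) :
    TB →g attachT TA TB a0 b0 :=
  ⟨Sum.inr, fun h => Or.inr (Or.inl ⟨_, _, rfl, rfl, h⟩)⟩

lemma lift_inl :
    ∀ {x y : α ⊕ β} (w : (attachT TA TB a0 b0).Walk x y),
      (∀ t ∈ w.support, ∃ z, t = Sum.inl z) →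
      ∀ {u v'}, x = Sum.inl u → y = Sum.inl v' →
      ∃ w' : TA.Walk u v', w.support = w'.support.map Sum.inl ∧
        w.edges = w'.edges.map (Sym2.map Sum.inl) := by
  intro x y w
  induction w with
  | nil =>
      rintro _ u v' rfl hy
      obtain rfl : u = v' := Sum.inl.inj hy
      exact ⟨.nil, by simp, by simp⟩
  | @cons x c y h p ih =>
      rintro hall u v' rfl hy
      obtain ⟨z, rfl⟩ := hall c (by simp)
      have hadj : TA.Adj u z := attachT_adj_inl_inl.1 h
      obtain ⟨p', hs, he⟩ := ih (fun t ht => hall t (by simp [ht])) rfl hy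
      refine ⟨.cons hadj p', ?_, ?_⟩
      · simp [SimpleGraph.Walk.support_cons, hs]
      · simp [SimpleGraph.Walk.edges_cons, he]

lemma lift_inr :
    ∀ {x y : α ⊕ β} (w : (attachT TA TB a0 b0).Walk x y),
      (∀ t ∈ w.support, ∃ z, t = Sum.inr z) →
      ∀ {u v'}, x = Sum.inr u → y = Sum.inr v' →
      ∃ w' : TB.Walk u v', w.support = w'.support.map Sum.inr ∧
        w.edges = w'.edges.map (Sym2.map Sum.inr) := by
  intro x y w
  induction w with
  | nil =>
      rintro _ u v' rfl hy
      obtain rfl : u = v' := Sum.inr.inj hy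
      exact ⟨.nil, by simp, by simp⟩
  | @cons x c y h p ih =>
      rintro hall u v' rfl hy
      obtain ⟨z, rfl⟩ := hall c (by simp)
      have hadj : TB.Adj u z := attachT_adj_inr_inr.1 h
      obtain ⟨p', hs, he⟩ := ih (fun t ht => hall t (by simp [ht])) rfl hy
      refine ⟨.cons hadj p', ?_, ?_⟩
      · simp [SimpleGraph.Walk.support_cons, hs]
      · simp [SimpleGraph.Walk.edges_cons, he]

/-- edges other than the linking edge do not change sides. -/
lemma adj_same_side {x y : α ⊕ β} (h : (attachT TA TB a0 b0).Adj x y)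
    (hne : s(x, y) ≠ s(Sum.inl a0, (Sum.inr b0 : α ⊕ β))) :
    x.isLeft = y.isLeft := by
  rcases h with ⟨u, v, rfl, rfl, _⟩ | ⟨u, v, rfl, rfl, _⟩ | ⟨rfl, rfl⟩ | ⟨rfl, rfl⟩
  · rfl
  · rfl
  · exact absurd rfl hne
  · exact absurd (Sym2.eq_swap) hne

lemma side_constant :
    ∀ {x y : α ⊕ β} (w : (attachT TA TB a0 b0).Walk x y),
      (∀ e ∈ w.edges, e ≠ s(Sum.inl a0, (Sum.inr b0 : α ⊕ β))) →
      ∀ t ∈ w.support, t.isLeft = x.isLeft := by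
  intro x y w
  induction w with
  | nil =>
      intro _ t ht
      rw [SimpleGraph.Walk.support_nil, List.mem_singleton] at ht
      rw [ht]
  | @cons x c y h p ih =>
      intro he t ht
      have hxc : c.isLeft = x.isLeft :=
        (adj_same_side h (he _ (by simp [SimpleGraph.Walk.edges_cons]))).symm
      rw [SimpleGraph.Walk.support_cons] at ht
      rcases List.mem_cons.1 ht with rfl | ht
      · rfl
      · rw [ih (fun e hee => he e (by simp [SimpleGraph.Walk.edges_cons, hee])) t ht, hxc]

lemma parity_e0 :
    ∀ {x y : α ⊕ β} (w : (attachT TA TB a0 b0).Walk x y),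
      (Even (w.edges.count s(Sum.inl a0, (Sum.inr b0 : α ⊕ β))) ↔ x.isLeft = y.isLeft) := by
  intro x y w
  induction w with
  | nil => simp
  | @cons x c y h p ih =>
      rw [SimpleGraph.Walk.edges_cons, List.count_cons]
      simp only [beq_iff_eq]
      by_cases he : s(x, c) = s(Sum.inl a0, (Sum.inr b0 : α ⊕ β))
      · have hxc : x.isLeft ≠ c.isLeft := by
          rcases Sym2.eq_iff.1 he with ⟨rfl, rfl⟩ | ⟨rfl, rfl⟩ <;> simp
        rw [if_pos he, Nat.even_add_one, ih]
        cases hc : c.isLeft <;> cases hy : y.isLeft <;> cases hx : x.isLeft <;>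
          simp_all
      · have hxc : x.isLeft = c.isLeft := adj_same_side h he
        rw [if_neg he, Nat.add_zero, ih, hxc]

lemma isCycle_of_lift {γ γ' : Type*} {Gc : SimpleGraph γ} {Gd : SimpleGraph γ'}
    {f : γ' → γ} {u : γ} {x : γ'} {w : Gc.Walk u u} {w' : Gd.Walk x x}
    (hs : w.support = w'.support.map f)
    (he : w.edges = w'.edges.map (Sym2.map f)) (hc : w.IsCycle) :
    w'.IsCycle := by
  classical
  rw [SimpleGraph.Walk.isCycle_def, SimpleGraph.Walk.isTrail_def] at hc ⊢
  obtain ⟨hnodupE, hne, hnodupS⟩ := hc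
  refine ⟨?_, ?_, ?_⟩
  · rw [he] at hnodupE
    exact List.Nodup.of_map _ hnodupE
  · rintro rfl
    apply hne
    have hlen : w.length = 0 := by
      have h1 : w.edges.length = 0 := by rw [he]; simp
      rwa [SimpleGraph.Walk.length_edges] at h1
    exact SimpleGraph.Walk.nil_iff_eq_nil.1 (SimpleGraph.Walk.length_eq_zero_iff.1 hlen)
  · rw [hs, ← List.map_tail] at hnodupS
    exact List.Nodup.of_map _ hnodupS

theorem isTree_attachT (hA : TA.IsTree) (hB : TB.IsTree) :
    (attachT TA TB a0 b0).IsTree := by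
  constructor
  · rw [SimpleGraph.connected_iff]
    have hreach : ∀ x : α ⊕ β, (attachT TA TB a0 b0).Reachable x (Sum.inl a0) := by
      rintro (u | u)
      · exact (hA.1.preconnected u a0).map (homInl TA TB a0 b0)
      · refine ((hB.1.preconnected u b0).map (homInr TA TB a0 b0)).trans ?_
        exact (SimpleGraph.Adj.reachable (Or.inr (Or.inr (Or.inr ⟨rfl, rfl⟩))))
    exact ⟨fun x y => (hreach x).trans (hreach y).symm, ⟨Sum.inl a0⟩⟩
  · intro v c hc
    rcases Classical.em (∀ t ∈ c.support, ∃ z, t = Sum.inl z) with hall | hall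
    · obtain ⟨v0, hv0⟩ := hall v c.start_mem_support
      subst hv0
      obtain ⟨w', hs, he⟩ := lift_inl c hall rfl rfl
      exact hA.2 w' (isCycle_of_lift hs he hc)
    rcases Classical.em (∀ t ∈ c.support, ∃ z, t = Sum.inr z) with hallr | hallr
    · obtain ⟨v0, hv0⟩ := hallr v c.start_mem_support
      subst hv0
      obtain ⟨w', hs, he⟩ := lift_inr c hallr rfl rfl
      exact hB.2 w' (isCycle_of_lift hs he hc)
    · push_neg at hall hallr
      obtain ⟨t1, ht1, ht1r⟩ := hall
      obtain ⟨t2, ht2, ht2l⟩ := hallr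
      have ht1side : t1.isLeft = false := by
        cases t1 with
        | inl z => exact absurd rfl (ht1r z)
        | inr z => rfl
      have ht2side : t2.isLeft = true := by
        cases t2 with
        | inl z => rfl
        | inr z => exact absurd rfl (ht2l z)
      have he0 : s(Sum.inl a0, (Sum.inr b0 : α ⊕ β)) ∈ c.edges := by
        by_contra h
        have hconst := side_constant c (fun e hee hh => h (hh ▸ hee))
        have h1 := hconst t1 ht1
        have h2 := hconst t2 ht2
        rw [ht1side] at h1
        rw [ht2side] at h2
        rw [← h1] at h2
        exact Bool.noConfusion h2
      have hnodup : c.edges.Nodup := by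
        rw [SimpleGraph.Walk.isCycle_def, SimpleGraph.Walk.isTrail_def] at hc
        exact hc.1
      have hcount : c.edges.count s(Sum.inl a0, (Sum.inr b0 : α ⊕ β)) = 1 :=
        List.count_eq_one_of_mem hnodup he0
      have heven := (parity_e0 c).2 rfl
      rw [hcount] at heven
      exact (Nat.not_even_one) heven

end Gq


open Set

namespace Gq

variable {V : Type*} {G : SimpleGraph V} {X S U C : Set V}

lemma induce_connected_map {γ δ : Type*} {T : SimpleGraph γ} {T' : SimpleGraph δ}
    (f : T →g T') (K : Set γ) (h : (T.induce K).Connected) :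
    (T'.induce (f '' K)).Connected := by
  have hmap : ∀ (x : ↥K), (f x.1) ∈ f '' K := fun x => ⟨x.1, x.2, rfl⟩
  refine h.map ⟨fun x => ⟨f x.1, hmap x⟩, ?_⟩ ?_
  · intro a b hab
    exact f.map_adj hab
  · rintro ⟨z, x, hx, rfl⟩
    exact ⟨⟨x, hx⟩, rfl⟩

lemma induce_connected_union {γ : Type*} {T : SimpleGraph γ} {K1 K2 : Set γ} {a b : γ}
    (h1 : (T.induce K1).Connected) (h2 : (T.induce K2).Connected)
    (ha : a ∈ K1) (hb : b ∈ K2) (hab : T.Adj a b ∨ a = b) :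
    (T.induce (K1 ∪ K2)).Connected := by
  refine connOn_iff_induce_connected.1 ?_
  exact (connOn_iff_induce_connected.2 h1).union (connOn_iff_induce_connected.2 h2)
    ⟨a, ha, b, hb, hab⟩

lemma isTree_unit : (⊥ : SimpleGraph PUnit).IsTree := by
  constructor
  · rw [SimpleGraph.connected_iff]
    exact ⟨fun a b => by rw [Subsingleton.elim a b], ⟨PUnit.unit⟩⟩
  · intro v c hc
    cases c with
    | nil => exact hc.ne_nil rfl
    | cons h p => exact h.elim

/-- A decomposition package for the part `U` of the region `X`. -/
structure Pack (G : SimpleGraph V) (X : Set V) (U : Set V) : Type _ where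
  ι : Type
  fin : Fintype ι
  T : SimpleGraph ι
  bag : ι → Set V
  tree : T.IsTree
  bags_sub : ∀ t, bag t ⊆ U
  cover : ∀ v ∈ U, ∃ t, v ∈ bag t
  edges : ∀ u v, (regG G X).Adj u v → u ∈ U → v ∈ U → ∃ t, u ∈ bag t ∧ v ∈ bag t
  conn : ∀ v ∈ U, (T.induce {t | v ∈ bag t}).Connected
  adh : ∀ s t, T.Adj s t → (bag s ∩ bag t).ncard ≤ 3
  torso_ok : ∀ t, IsMinor (torso G (bag t)) G ∧
    (Quasi4Connected (torso G (bag t)) ∨ (torso G (bag t) = ⊤ ∧ (bag t).ncard ≤ 4))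
  clique : ∀ W, W ⊆ U → (∀ a ∈ W, ∀ b ∈ W, a ≠ b → (regG G X).Adj a b) →
    ∃ t, W ⊆ bag t

/-- The one-bag package. -/
def singlePack (G : SimpleGraph V) (X : Set V)
    (hmin : IsMinor (torso G X) G)
    (hq : Quasi4Connected (torso G X) ∨ (torso G X = ⊤ ∧ X.ncard ≤ 4)) :
    Pack G X X where
  ι := PUnit
  fin := inferInstance
  T := ⊥
  bag := fun _ => X
  tree := isTree_unit
  bags_sub := fun _ => le_rfl
  cover := fun v hv => ⟨PUnit.unit, hv⟩
  edges := fun u v _ hu hv => ⟨PUnit.unit, hu, hv⟩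
  conn := by
    intro v hv
    rw [SimpleGraph.connected_iff]
    exact ⟨fun a b => by rw [Subsingleton.elim a b], ⟨⟨PUnit.unit, hv⟩⟩⟩
  adh := fun s t h => h.elim
  torso_ok := fun _ => ⟨hmin, hq⟩
  clique := fun W hW _ => ⟨PUnit.unit, hW⟩

/-- Attaching a branch package to a centred package. -/
def packAttach [Fintype V] (P : Pack G X U) (c : P.ι) (hc : P.bag c = S)
    (Q : Pack G (C ∪ S) (C ∪ S)) (r : Q.ι) (hr : S ⊆ Q.bag r)
    (hS3 : S.ncard ≤ 3)
    (hUC : Disjoint U C)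
    (hSU : S ⊆ U)
    (hconv : ∀ u v, (regG G X).Adj u v → u ∈ C ∪ S → v ∈ C ∪ S →
      (regG G (C ∪ S)).Adj u v)
    (hsep : ∀ u v, (regG G X).Adj u v → u ∈ C → v ∈ C ∪ S) :
    Pack G X (U ∪ C) where
  ι := P.ι ⊕ Q.ι
  fin := @instFintypeSum _ _ P.fin Q.fin
  T := attachT P.T Q.T c r
  bag := Sum.elim P.bag Q.bag
  tree := isTree_attachT P.tree Q.tree
  bags_sub := by
    rintro (t | t) v hv
    · exact Or.inl (P.bags_sub t hv)
    · rcases Q.bags_sub t hv with h | h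
      · exact Or.inr h
      · exact Or.inl (hSU h)
  cover := by
    rintro v (hv | hv)
    · obtain ⟨t, ht⟩ := P.cover v hv
      exact ⟨Sum.inl t, ht⟩
    · obtain ⟨t, ht⟩ := Q.cover v (Or.inl hv)
      exact ⟨Sum.inr t, ht⟩
  edges := by
    intro u v hadj hu hv
    by_cases huC : u ∈ C
    · obtain ⟨t, ht⟩ := Q.edges u v (hconv u v hadj (Or.inl huC) (hsep u v hadj huC))
        (Or.inl huC) (hsep u v hadj huC)
      exact ⟨Sum.inr t, ht⟩
    by_cases hvC : v ∈ C
    · obtain ⟨t, ht⟩ := Q.edges u v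
        (hconv u v hadj (hsep v u hadj.symm hvC) (Or.inl hvC))
        (hsep v u hadj.symm hvC) (Or.inl hvC)
      exact ⟨Sum.inr t, ht⟩
    · have huU : u ∈ U := hu.resolve_right huC
      have hvU : v ∈ U := hv.resolve_right hvC
      obtain ⟨t, ht⟩ := P.edges u v hadj huU hvU
      exact ⟨Sum.inl t, ht⟩
  conn := by
    intro v hv
    by_cases hvS : v ∈ S
    · have hset : {t : P.ι ⊕ Q.ι | v ∈ Sum.elim P.bag Q.bag t} =
          Sum.inl '' {t | v ∈ P.bag t} ∪ Sum.inr '' {t | v ∈ Q.bag t} := by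
        ext (t | t)
        · simp
        · simp
      rw [hset]
      refine induce_connected_union
        (induce_connected_map (homInl P.T Q.T c r) _ (P.conn v (hSU hvS)))
        (induce_connected_map (homInr P.T Q.T c r) _ (Q.conn v (Or.inr hvS)))
        ⟨c, by rw [Set.mem_setOf_eq, hc]; exact hvS, rfl⟩
        ⟨r, hr hvS, rfl⟩ (Or.inl (Or.inr (Or.inr (Or.inl ⟨rfl, rfl⟩))))
    by_cases hvC : v ∈ C
    · have hvU : v ∉ U := fun h => (Set.disjoint_left.1 hUC h) hvC
      have hset : {t : P.ι ⊕ Q.ι | v ∈ Sum.elim P.bag Q.bag t} =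
          Sum.inr '' {t | v ∈ Q.bag t} := by
        ext (t | t)
        · simp only [Set.mem_setOf_eq, Sum.elim_inl]
          constructor
          · intro h; exact absurd (P.bags_sub t h) hvU
          · rintro ⟨x, _, hx⟩; exact absurd hx (by simp)
        · simp
      rw [hset]
      exact induce_connected_map (homInr P.T Q.T c r) _ (Q.conn v (Or.inl hvC))
    · have hvU : v ∈ U := hv.resolve_right hvC
      have hset : {t : P.ι ⊕ Q.ι | v ∈ Sum.elim P.bag Q.bag t} =
          Sum.inl '' {t | v ∈ P.bag t} := by
        ext (t | t)
        · simp
        · simp only [Set.mem_setOf_eq, Sum.elim_inr]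
          constructor
          · intro h
            rcases Q.bags_sub t h with h' | h'
            · exact absurd h' hvC
            · exact absurd h' hvS
          · rintro ⟨x, _, hx⟩; exact absurd hx (by simp)
      rw [hset]
      exact induce_connected_map (homInl P.T Q.T c r) _ (P.conn v hvU)
  adh := by
    rintro (s | s) (t | t) hadj
    · exact P.adh s t (attachT_adj_inl_inl.1 hadj)
    · obtain ⟨rfl, rfl⟩ := attachT_adj_inl_inr.1 hadj
      refine le_trans (Set.ncard_le_ncard ?_ (Set.toFinite _)) hS3
      simp only [Sum.elim_inl, Sum.elim_inr]
      rw [hc]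
      exact Set.inter_subset_left
    · obtain ⟨rfl, rfl⟩ := attachT_adj_inl_inr.1 hadj.symm
      refine le_trans (Set.ncard_le_ncard ?_ (Set.toFinite _)) hS3
      simp only [Sum.elim_inl, Sum.elim_inr]
      rw [hc]
      exact Set.inter_subset_right
    · exact Q.adh s t (attachT_adj_inr_inr.1 hadj)
  torso_ok := by
    rintro (t | t)
    · exact P.torso_ok t
    · exact Q.torso_ok t
  clique := by
    intro W hW hWc
    by_cases hWC : (W ∩ C).Nonempty
    · obtain ⟨w0, hw0W, hw0C⟩ := hWC
      have hWsub : W ⊆ C ∪ S := by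
        intro w hw
        by_cases hww : w = w0
        · exact Or.inl (hww ▸ hw0C)
        · exact hsep w0 w (hWc w0 hw0W w hw (Ne.symm hww)) hw0C
      obtain ⟨t, ht⟩ := Q.clique W hWsub
        (fun a ha b hb hab => hconv a b (hWc a ha b hb hab) (hWsub ha) (hWsub hb))
      exact ⟨Sum.inr t, ht⟩
    · have hWU : W ⊆ U := by
        intro w hw
        rcases hW hw with h | h
        · exact h
        · exact absurd ⟨hw, h⟩ (fun hcon => hWC ⟨w, hcon⟩)
      obtain ⟨t, ht⟩ := P.clique W hWU hWc
      exact ⟨Sum.inl t, ht⟩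

end Gq


open Set
open scoped Classical

namespace Gq

variable {V : Type*} {G : SimpleGraph V} {X S C : Set V} {u v w s s' : V}

lemma regG_conv (hX'X : C ∪ S ⊆ X) (h : (regG G X).Adj u v)
    (hu : u ∈ C ∪ S) (hv : v ∈ C ∪ S) : (regG G (C ∪ S)).Adj u v := by
  rw [← regG_comp hX'X]
  exact regG_adj_of_adj h hu hv

/-- if `C'` is another component (disjoint from `C ∪ S`) with full neighbourhood `S`,
then `S` is a clique in the sub-region `C ∪ S`. -/
lemma sClique (hX'X : C ∪ S ⊆ X) {C' : Set V}
    (hC'conn : ConnOn (regG G X) C')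
    (hC'd : Disjoint C' (C ∪ S))
    (hC'cl : ∀ u ∈ C', ∀ z, (regG G X).Adj u z → z ∉ S → z ∈ C')
    (hC'N : Nbhd (regG G X) C' = S)
    (hs : s ∈ S) (hs' : s' ∈ S) (hne : s ≠ s') :
    (regG G (C ∪ S)).Adj s s' := by
  rw [← regG_comp hX'X]
  have hcomp : IsCompOutside (regG G X) (C ∪ S) C' := by
    refine ⟨fun z hz => Set.disjoint_left.1 hC'd hz, connOn_iff_induce_connected.1 hC'conn, ?_⟩
    intro a ha z hz hadj
    exact hC'cl a ha z hadj (fun hzS => hz (Or.inr hzS))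
  refine ⟨hne, Or.inr hs, Or.inr hs', Or.inr ⟨C', hcomp, ?_, ?_⟩⟩
  · rw [hC'N]; exact hs
  · rw [hC'N]; exact hs'

/-- Building a region model of a sub-region from branch sets for the separator. -/
lemma submodel [Fintype V] {M A : V → Set V}
    (hM : RModel G X M) (hX'X : C ∪ S ⊆ X)
    (hclo : ∀ u ∈ C, ∀ z, (regG G X).Adj u z → z ∉ S → z ∈ C)
    (hA1 : ∀ s ∈ S, s ∈ A s)
    (hA2 : ∀ s ∈ S, A s ⊆ X)
    (hA3 : ∀ s ∈ S, Disjoint (A s) C)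
    (hA4 : ∀ s ∈ S, ConnOn (regG G X) (A s))
    (hA5 : ∀ s ∈ S, ∀ s' ∈ S, s ≠ s' → Disjoint (A s) (A s'))
    (hA6 : ∀ s ∈ S, ∀ s' ∈ S, s ≠ s' →
      ∃ a ∈ A s, ∃ b ∈ A s', (regG G X).Adj a b) :
    RModel G (C ∪ S) (fun v => if v ∈ S then ⋃ u ∈ A v, M u else M v) := by
  have hMsub : ∀ v ∈ C ∪ S, M v ⊆ (if v ∈ S then ⋃ u ∈ A v, M u else M v) := by
    intro v hv
    by_cases hvS : v ∈ S
    · rw [if_pos hvS]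
      exact Set.subset_biUnion_of_mem (hA1 v hvS)
    · rw [if_neg hvS]
  have hsub2 : ∀ v ∈ C ∪ S, (if v ∈ S then ⋃ u ∈ A v, M u else M v) ⊆
      ⋃ u ∈ (if v ∈ S then A v else {v}), M u := by
    intro v hv
    by_cases hvS : v ∈ S
    · rw [if_pos hvS, if_pos hvS]
    · rw [if_neg hvS, if_neg hvS]; simp
  refine ⟨?_, ?_, ?_, ?_⟩
  · intro v hv
    exact hMsub v hv (hM.1 v (hX'X hv))
  · intro v hv
    dsimp only
    by_cases hvS : v ∈ S
    · rw [if_pos hvS]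
      refine connOn_biUnion (hA4 v hvS) ?_ ?_
      · exact fun a ha => hM.2.1 a (hA2 v hvS ha)
      · intro a ha b hb hadj
        exact hM.2.2.2 a (hA2 v hvS ha) b (hA2 v hvS hb) hadj
    · rw [if_neg hvS]
      exact hM.2.1 v (hX'X hv)
  · intro u hu v hv hne
    have key : ∀ a ∈ (if u ∈ S then A u else {u}), ∀ b ∈ (if v ∈ S then A v else {v}),
        a ≠ b := by
      intro a ha b hb
      by_cases huS : u ∈ S <;> by_cases hvS : v ∈ S
      · rw [if_pos huS] at ha; rw [if_pos hvS] at hb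
        exact fun h => (Set.disjoint_left.1 (hA5 u huS v hvS hne) ha) (h ▸ hb)
      · rw [if_pos huS] at ha; rw [if_neg hvS] at hb
        have hvC : v ∈ C := hv.resolve_right hvS
        have : b = v := hb
        rw [this]
        exact fun h => (Set.disjoint_left.1 (hA3 u huS) ha) (h ▸ hvC)
      · rw [if_neg huS] at ha; rw [if_pos hvS] at hb
        have huC : u ∈ C := hu.resolve_right huS
        have : a = u := ha
        rw [this]
        exact fun h => (Set.disjoint_left.1 (hA3 v hvS) hb) (h.symm ▸ huC)
      · rw [if_neg huS] at ha; rw [if_neg hvS] at hb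
        have : a = u := ha
        have : b = v := hb
        simp_all
    have hXmem : ∀ a ∈ (if u ∈ S then A u else {u}), a ∈ X := by
      intro a ha
      by_cases huS : u ∈ S
      · rw [if_pos huS] at ha; exact hA2 u huS ha
      · rw [if_neg huS] at ha; exact (ha : a = u) ▸ hX'X hu
    have hXmem' : ∀ b ∈ (if v ∈ S then A v else {v}), b ∈ X := by
      intro b hb
      by_cases hvS : v ∈ S
      · rw [if_pos hvS] at hb; exact hA2 v hvS hb
      · rw [if_neg hvS] at hb; exact (hb : b = v) ▸ hX'X hv
    refine Set.disjoint_left.2 fun x hx hx' => ?_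
    have hx2 := hsub2 u hu hx
    have hx2' := hsub2 v hv hx'
    obtain ⟨a, ha, hxa⟩ := Set.mem_iUnion₂.1 hx2
    obtain ⟨b, hb, hxb⟩ := Set.mem_iUnion₂.1 hx2'
    exact (Set.disjoint_left.1
      (hM.2.2.1 a (hXmem a ha) b (hXmem' b hb) (key a ha b hb)) hxa) hxb
  · intro u hu v hv hadj
    have hadj' : (regG (regG G X) (C ∪ S)).Adj u v := by
      rw [regG_comp hX'X]; exact hadj
    obtain ⟨hne, hu', hv', hcase⟩ := hadj'
    rcases hcase with h | ⟨E, hE, huN, hvN⟩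
    · obtain ⟨a, ha, b, hb, hab⟩ :=
        hM.2.2.2 u (hX'X hu) v (hX'X hv) h
      exact ⟨a, hMsub u hu ha, b, hMsub v hv hb, hab⟩
    · have hmemS : ∀ z ∈ C ∪ S, z ∈ Nbhd (regG G X) E → z ∈ S := by
        rintro z hz ⟨hzE, e, heE, headj⟩
        rcases hz with hzC | hzS
        · exfalso
          have heC : e ∈ C := hclo z hzC e headj.symm
            (fun hS => (hE.1 heE) (Or.inr hS))
          exact (hE.1 heE) (Or.inl heC)
        · exact hzS
      have huS : u ∈ S := hmemS u hu huN
      have hvS : v ∈ S := hmemS v hv hvN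
      obtain ⟨a, ha, b, hb, hab⟩ := hA6 u huS v hvS hne
      obtain ⟨a', ha', b', hb', hab'⟩ :=
        hM.2.2.2 a (hA2 u huS ha) b (hA2 v hvS hb) hab
      refine ⟨a', ?_, b', ?_, hab'⟩
      · dsimp only
        rw [if_pos huS]
        exact Set.mem_biUnion ha ha'
      · dsimp only
        rw [if_pos hvS]
        exact Set.mem_biUnion hb hb'

end Gq


open Set
open scoped Classical

namespace Gq

variable {V : Type*} {G : SimpleGraph V} {X S C : Set V}

lemma RSep.swap {Y Z : Set V} (h : RSep G X Y S Z) : RSep G X Z S Y := by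
  obtain ⟨h1, h2, h3, h4, h5⟩ := h
  refine ⟨?_, h4.symm, h3.symm, h2.symm, ?_⟩
  · rw [← h1]; ext t; constructor
    · rintro ((h | h) | h)
      · exact Or.inr h
      · exact Or.inl (Or.inr h)
      · exact Or.inl (Or.inl h)
    · rintro ((h | h) | h)
      · exact Or.inr h
      · exact Or.inl (Or.inr h)
      · exact Or.inl (Or.inl h)
  · intro z hz y hy hadj
    exact h5 y hy z hz hadj.symm

/-- what the submodel construction needs. -/
def AProps (G : SimpleGraph V) (X S C : Set V) (A : V → Set V) : Prop :=
  (∀ s ∈ S, s ∈ A s) ∧ (∀ s ∈ S, A s ⊆ X) ∧ (∀ s ∈ S, Disjoint (A s) C) ∧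
  (∀ s ∈ S, ConnOn (regG G X) (A s)) ∧
  (∀ s ∈ S, ∀ s' ∈ S, s ≠ s' → Disjoint (A s) (A s')) ∧
  (∀ s ∈ S, ∀ s' ∈ S, s ≠ s' → ∃ a ∈ A s, ∃ b ∈ A s', (regG G X).Adj a b)

lemma Afrom1 [Fintype V] (hSX : S ⊆ X) (hS1 : S.ncard ≤ 1) (hCS : Disjoint C S) :
    ∃ A, AProps G X S C A := by
  refine ⟨fun s => {s}, fun s _ => rfl, ?_, ?_, fun s _ => connOn_singleton s, ?_, ?_⟩
  · intro s hs t ht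
    exact (ht : t = s) ▸ hSX hs
  · intro s hs
    exact Set.disjoint_singleton_left.2 (fun h => (Set.disjoint_left.1 hCS h) hs)
  · intro s hs s' hs' hne
    exfalso
    have : ({s, s'} : Set V).ncard ≤ S.ncard :=
      Set.ncard_le_ncard (by rintro t (rfl | rfl) <;> assumption) (Set.toFinite _)
    rw [Set.ncard_pair hne] at this
    omega
  · intro s hs s' hs' hne
    exfalso
    have : ({s, s'} : Set V).ncard ≤ S.ncard :=
      Set.ncard_le_ncard (by rintro t (rfl | rfl) <;> assumption) (Set.toFinite _)
    rw [Set.ncard_pair hne] at this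
    omega

lemma Afrom2 [Fintype V] {a b : V} (hSX : S ⊆ X) (hab : a ≠ b) (hS : S = {a, b})
    (hCS : Disjoint C S)
    {C1 : Set V} (hC1X : C1 ⊆ X) (hC1S : Disjoint C1 S) (hC1C : Disjoint C1 C)
    (hC1conn : ConnOn (regG G X) C1) (hC1N : Nbhd (regG G X) C1 = S) :
    ∃ A, AProps G X S C A := by
  have haS : a ∈ S := by rw [hS]; exact Or.inl rfl
  have hbS : b ∈ S := by rw [hS]; exact Or.inr rfl
  have haN : a ∈ Nbhd (regG G X) C1 := by rw [hC1N]; exact haS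
  have hbN : b ∈ Nbhd (regG G X) C1 := by rw [hC1N]; exact hbS
  obtain ⟨-, ua, hua, huaa⟩ := haN
  obtain ⟨-, ub, hub, hubb⟩ := hbN
  refine ⟨fun v => if v = a then insert a C1 else {v}, ?_, ?_, ?_, ?_, ?_, ?_⟩
  · intro s hs
    dsimp only
    by_cases h : s = a
    · rw [if_pos h, h]; exact Set.mem_insert _ _
    · rw [if_neg h]; rfl
  · intro s hs t ht
    dsimp only at ht ⊢
    by_cases h : s = a
    · rw [if_pos h] at ht
      rcases Set.mem_insert_iff.1 ht with rfl | ht'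
      · exact hSX haS
      · exact hC1X ht'
    · rw [if_neg h] at ht
      exact (ht : t = s) ▸ hSX hs
  · intro s hs
    dsimp only
    by_cases h : s = a
    · rw [if_pos h]
      refine Set.disjoint_left.2 fun t ht htC => ?_
      rcases Set.mem_insert_iff.1 ht with rfl | ht'
      · exact (Set.disjoint_left.1 hCS htC) haS
      · exact (Set.disjoint_left.1 hC1C ht') htC
    · rw [if_neg h]
      exact Set.disjoint_singleton_left.2 (fun hc => (Set.disjoint_left.1 hCS hc) hs)
  · intro s hs
    dsimp only
    by_cases h : s = a
    · rw [if_pos h]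
      exact hC1conn.insert_adj hua huaa.symm
    · rw [if_neg h]
      exact connOn_singleton s
  · intro s hs s' hs' hne
    dsimp only
    have hmem : ∀ t ∈ S, t = a ∨ t = b := by rw [hS]; exact fun t ht => ht
    rcases hmem s hs with h1 | h1 <;> rcases hmem s' hs' with h2 | h2
    · exact absurd (h1.trans h2.symm) hne
    · rw [if_pos h1, if_neg (fun hh : s' = a => hab ((hh.symm.trans h2) : a = b))]
      refine Set.disjoint_left.2 fun t ht (hts : t = s') => ?_
      rcases Set.mem_insert_iff.1 ht with rfl | ht'
      · exact hab (hts.trans h2)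
      · exact (Set.disjoint_left.1 hC1S ht') ((hts.trans h2) ▸ hbS)
    · rw [if_neg (fun hh : s = a => hab ((hh.symm.trans h1) : a = b)), if_pos h2]
      refine Set.disjoint_left.2 fun t (hts : t = s) ht => ?_
      rcases Set.mem_insert_iff.1 ht with h3 | ht'
      · exact hab ((h3.symm.trans hts).trans h1)
      · exact (Set.disjoint_left.1 hC1S ht') ((hts.trans h1) ▸ hbS)
    · exact absurd (h1.trans h2.symm) hne
  · intro s hs s' hs' hne
    dsimp only
    have hmem : ∀ t ∈ S, t = a ∨ t = b := by rw [hS]; exact fun t ht => ht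
    rcases hmem s hs with h1 | h1 <;> rcases hmem s' hs' with h2 | h2
    · exact absurd (h1.trans h2.symm) hne
    · rw [if_pos h1, if_neg (fun hh : s' = a => hab ((hh.symm.trans h2) : a = b))]
      exact ⟨ub, Or.inr hub, s', rfl, by rw [h2]; exact hubb⟩
    · rw [if_neg (fun hh : s = a => hab ((hh.symm.trans h1) : a = b)), if_pos h2]
      exact ⟨s, rfl, ub, Or.inr hub, by rw [h1]; exact hubb.symm⟩
    · exact absurd (h1.trans h2.symm) hne

lemma Afrom3 [Fintype V] {a b c : V} {A1 A2 A3 : Set V} (hSX : S ⊆ X) (hS : S = {a, b, c})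
    (hab : a ≠ b) (hac : a ≠ c) (hbc : b ≠ c)
    (ha : a ∈ A1) (hb : b ∈ A2) (hc : c ∈ A3)
    (h1X : A1 ⊆ X) (h2X : A2 ⊆ X) (h3X : A3 ⊆ X)
    (h1C : Disjoint A1 C) (h2C : Disjoint A2 C) (h3C : Disjoint A3 C)
    (h1conn : ConnOn (regG G X) A1) (h2conn : ConnOn (regG G X) A2)
    (h3conn : ConnOn (regG G X) A3)
    (hd12 : Disjoint A1 A2) (hd13 : Disjoint A1 A3) (hd23 : Disjoint A2 A3)
    (he12 : ∃ x ∈ A1, ∃ y ∈ A2, (regG G X).Adj x y)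
    (he13 : ∃ x ∈ A1, ∃ y ∈ A3, (regG G X).Adj x y)
    (he23 : ∃ x ∈ A2, ∃ y ∈ A3, (regG G X).Adj x y) :
    ∃ A, AProps G X S C A := by
  refine ⟨fun v => if v = a then A1 else if v = b then A2 else if v = c then A3 else {v},
    ?_, ?_, ?_, ?_, ?_, ?_⟩
  · intro s hs
    dsimp only
    by_cases h1 : s = a
    · rw [if_pos h1, h1]; exact ha
    by_cases h2 : s = b
    · rw [if_neg h1, if_pos h2, h2]; exact hb
    by_cases h3 : s = c
    · rw [if_neg h1, if_neg h2, if_pos h3, h3]; exact hc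
    · exfalso; rw [hS] at hs; rcases hs with h | h | h <;> simp_all
  · intro s hs
    dsimp only
    by_cases h1 : s = a
    · rw [if_pos h1]; exact h1X
    by_cases h2 : s = b
    · rw [if_neg h1, if_pos h2]; exact h2X
    by_cases h3 : s = c
    · rw [if_neg h1, if_neg h2, if_pos h3]; exact h3X
    · exfalso; rw [hS] at hs; rcases hs with h | h | h <;> simp_all
  · intro s hs
    dsimp only
    by_cases h1 : s = a
    · rw [if_pos h1]; exact h1C
    by_cases h2 : s = b
    · rw [if_neg h1, if_pos h2]; exact h2C
    by_cases h3 : s = c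
    · rw [if_neg h1, if_neg h2, if_pos h3]; exact h3C
    · exfalso; rw [hS] at hs; rcases hs with h | h | h <;> simp_all
  · intro s hs
    dsimp only
    by_cases h1 : s = a
    · rw [if_pos h1]; exact h1conn
    by_cases h2 : s = b
    · rw [if_neg h1, if_pos h2]; exact h2conn
    by_cases h3 : s = c
    · rw [if_neg h1, if_neg h2, if_pos h3]; exact h3conn
    · exfalso; rw [hS] at hs; rcases hs with h | h | h <;> simp_all
  · intro s hs s' hs' hne
    dsimp only
    have hmem : ∀ t ∈ S, t = a ∨ t = b ∨ t = c := by rw [hS]; exact fun t ht => ht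
    rcases hmem s hs with rfl | rfl | rfl <;> rcases hmem s' hs' with rfl | rfl | rfl <;>
      first
      | exact absurd rfl hne
      | (rw [if_pos rfl, if_neg, if_pos rfl] <;> first | exact hd12 | assumption)
      | skip
    all_goals simp only [if_pos rfl, if_neg hab, if_neg hac, if_neg hbc,
      if_neg (Ne.symm hab), if_neg (Ne.symm hac), if_neg (Ne.symm hbc)]
    · exact hd12
    · exact hd13
    · exact hd12.symm
    · exact hd23
    · exact hd13.symm
    · exact hd23.symm
  · intro s hs s' hs' hne
    dsimp only
    have hmem : ∀ t ∈ S, t = a ∨ t = b ∨ t = c := by rw [hS]; exact fun t ht => ht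
    rcases hmem s hs with rfl | rfl | rfl <;> rcases hmem s' hs' with rfl | rfl | rfl <;>
      simp only [if_pos rfl, if_neg hab, if_neg hac, if_neg hbc,
        if_neg (Ne.symm hab), if_neg (Ne.symm hac), if_neg (Ne.symm hbc)]
    · exact absurd rfl hne
    · exact he12
    · exact he13
    · obtain ⟨x, hx, y, hy, hxy⟩ := he12; exact ⟨y, hy, x, hx, hxy.symm⟩
    · exact absurd rfl hne
    · exact he23
    · obtain ⟨x, hx, y, hy, hxy⟩ := he13; exact ⟨y, hy, x, hx, hxy.symm⟩
    · obtain ⟨x, hx, y, hy, hxy⟩ := he23; exact ⟨y, hy, x, hx, hxy.symm⟩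
    · exact absurd rfl hne

end Gq


open Set
open scoped Classical

namespace Gq

variable {V : Type*}

/-- transport a pack along an equality of covered parts. -/
def Pack.castU {G : SimpleGraph V} {X U U' : Set V} (h : U = U') (P : Pack G X U) :
    Pack G X U' where
  ι := P.ι
  fin := P.fin
  T := P.T
  bag := P.bag
  tree := P.tree
  bags_sub := h ▸ P.bags_sub
  cover := h ▸ P.cover
  edges := h ▸ P.edges
  conn := h ▸ P.conn
  adh := P.adh
  torso_ok := P.torso_ok
  clique := h ▸ P.clique

theorem splitPack [Fintype V] {G : SimpleGraph V} {X S Y Z : Set V} {M : V → Set V} {n : ℕ}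
    (ih : ∀ X' M', X'.ncard ≤ n → RModel G X' M' → Nonempty (Pack G X' X'))
    (hn : X.ncard ≤ n + 1) (hM : RModel G X M)
    (hsep : RSep G X Y S Z) (hY : Y.Nonempty) (hZ : Z.Nonempty)
    (hminS : ∀ Y' S' Z', RSep G X Y' S' Z' → Y'.Nonempty → Z'.Nonempty →
      S.ncard ≤ S'.ncard)
    (hS3 : S.ncard ≤ 3)
    (hbig : S.ncard = 3 → 2 ≤ Y.ncard ∧ 2 ≤ Z.ncard) :
    Nonempty (Pack G X X) := by
  obtain ⟨y0, hy0⟩ := hY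
  obtain ⟨z0, hz0⟩ := hZ
  have hYX := hsep.Y_subset
  have hZX := hsep.Z_subset
  have hSX := hsep.S_subset
  have hy0S : y0 ∉ S := fun h => (Set.disjoint_left.1 hsep.2.1 hy0) h
  have hz0S : z0 ∉ S := fun h => (Set.disjoint_right.1 hsep.2.2.2.1 hz0) h
  set Pset : Set (Set V) :=
    {D | ∃ v, (v ∈ X ∧ v ∉ S) ∧ D = compOf (regG G X) S v} with hPdef
  set Cy := compOf (regG G X) S y0 with hCydef
  set Cz := compOf (regG G X) S z0 with hCzdef
  have hCyP : Cy ∈ Pset := ⟨y0, ⟨hYX hy0, hy0S⟩, rfl⟩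
  have hCzP : Cz ∈ Pset := ⟨z0, ⟨hZX hz0, hz0S⟩, rfl⟩
  have hCyY : Cy ⊆ Y := comp_subset_side hsep hy0
  have hCzZ : Cz ⊆ Z := comp_subset_side hsep.swap hz0
  have hCyCz : Cy ≠ Cz := by
    intro h
    have h2 : y0 ∈ Cz := h ▸ mem_compOf_self hy0S
    exact (Set.disjoint_left.1 hsep.2.2.1 hy0) (hCzZ h2)
  have hfacts : ∀ D ∈ Pset, D ⊆ X ∧ Disjoint D S ∧ ConnOn (regG G X) D ∧
      Nbhd (regG G X) D = S ∧ D.Nonempty ∧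
      (∀ u ∈ D, ∀ w, (regG G X).Adj u w → w ∉ S → w ∈ D) := by
    rintro D ⟨v, ⟨hvX, hvS⟩, rfl⟩
    refine ⟨compOf_regG_subset hvX, ?_, compOf_connOn hvS,
      nbhd_comp_eq_sep hSX hminS hvX hvS, ⟨v, mem_compOf_self hvS⟩, ?_⟩
    · exact Set.disjoint_left.2 fun t ht hts => (compOf_subset ht) hts
    · intro u hu w hadj hwS
      exact compOf_closed hu hwS hadj
  have hdisjP : ∀ D ∈ Pset, ∀ D' ∈ Pset, D ≠ D' → Disjoint D D' := by
    rintro D ⟨v, hv, rfl⟩ D' ⟨v', hv', rfl⟩ hne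
    refine Set.disjoint_left.2 fun x hx hx' => hne ?_
    rw [← compOf_eq_of_mem hx, ← compOf_eq_of_mem hx']
  have hother : ∀ D ∈ Pset, ∃ D' ∈ Pset, D' ≠ D := by
    intro D hD
    by_cases h : D = Cy
    · exact ⟨Cz, hCzP, fun e => hCyCz (h ▸ e).symm⟩
    · exact ⟨Cy, hCyP, fun e => h e.symm⟩
  have hNbhdSub : ∀ D ∈ Pset, ∀ E ⊆ D, Nbhd (regG G X) E ⊆ D ∪ S := by
    intro D hD E hED t ht
    obtain ⟨htE, u, hu, hadj⟩ := ht
    by_cases htS : t ∈ S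
    · exact Or.inr htS
    · exact Or.inl ((hfacts D hD).2.2.2.2.2 u (hED hu) t hadj htS)
  have hdeg : ∀ D ∈ Pset, ∀ D' ∈ Pset, D ≠ D' → ∀ E ⊆ D', E.Nonempty →
      S.ncard ≤ (Nbhd (regG G X) E).ncard := by
    intro D hD D' hD' hne E hE hEne
    obtain ⟨t0, ht0⟩ := (hfacts D hD).2.2.2.2.1
    refine nbhd_card_ge hminS hEne (hE.trans (hfacts D' hD').1)
      ⟨t0, (hfacts D hD).1 ht0, ?_, ?_⟩
    · exact fun h => (Set.disjoint_left.1 (hdisjP D hD D' hD' hne) ht0) (hE h)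
    · intro h
      rcases hNbhdSub D' hD' E hE h with h' | h'
      · exact (Set.disjoint_left.1 (hdisjP D hD D' hD' hne) ht0) h'
      · exact (Set.disjoint_left.1 (hfacts D hD).2.1 ht0) h'
  -- branch sets for each component
  have hA : ∀ D ∈ Pset, ∃ A, AProps G X S D A := by
    intro D hD
    obtain ⟨D', hD'P, hD'ne⟩ := hother D hD
    obtain ⟨hD'X, hD'S, hD'conn, hD'N, hD'nem, hD'clo⟩ := hfacts D' hD'P
    have hDD' : Disjoint D' D := hdisjP D' hD'P D hD hD'ne
    have hgetAdj : ∀ {D'' : Set V}, D'' ∈ Pset → ∀ s ∈ S,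
        ∃ u ∈ D'', (regG G X).Adj u s := by
      intro D'' hD'' s hs
      have h2 : s ∈ Nbhd (regG G X) D'' := by rw [(hfacts D'' hD'').2.2.2.1]; exact hs
      obtain ⟨-, u, hu, hadj⟩ := h2
      exact ⟨u, hu, hadj⟩
    rcases Nat.lt_or_ge S.ncard 2 with hc | hc
    · exact Afrom1 hSX (by omega) (hfacts D hD).2.1
    rcases Nat.lt_or_ge S.ncard 3 with hc3 | hc3
    · have h2 : S.ncard = 2 := by omega
      obtain ⟨a, b, hab, hSab⟩ := Set.ncard_eq_two.1 h2
      exact Afrom2 hSX hab hSab (hfacts D hD).2.1 hD'X hD'S hDD' hD'conn hD'N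
    have h3 : S.ncard = 3 := by omega
    obtain ⟨a, b, c, hab, hac, hbc, hSabc⟩ := Set.ncard_eq_three.1 h3
    have haS : a ∈ S := by rw [hSabc]; exact Or.inl rfl
    have hbS : b ∈ S := by rw [hSabc]; exact Or.inr (Or.inl rfl)
    have hcS : c ∈ S := by rw [hSabc]; exact Or.inr (Or.inr rfl)
    by_cases hm3 : ∃ D2 ∈ Pset, D2 ≠ D ∧ D2 ≠ D'
    · obtain ⟨D2, hD2P, hD2D, hD2D'⟩ := hm3
      obtain ⟨hD2X, hD2S, hD2conn, hD2N, hD2ne, hD2clo⟩ := hfacts D2 hD2P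
      obtain ⟨ua, hua, huaa⟩ := hgetAdj hD'P a haS
      obtain ⟨ub1, hub1, hub1b⟩ := hgetAdj hD'P b hbS
      obtain ⟨uc1, huc1, huc1c⟩ := hgetAdj hD'P c hcS
      obtain ⟨ub2, hub2, hub2b⟩ := hgetAdj hD2P b hbS
      obtain ⟨uc2, huc2, huc2c⟩ := hgetAdj hD2P c hcS
      have hD'D2 : Disjoint D' D2 := hdisjP D' hD'P D2 hD2P (fun e => hD2D' e.symm)
      refine Afrom3 (A1 := insert a D') (A2 := insert b D2) (A3 := {c})
        hSX hSabc hab hac hbc (Set.mem_insert _ _) (Set.mem_insert _ _) rfl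
        ?_ ?_ ?_ ?_ ?_ ?_ ?_ ?_ ?_ ?_ ?_ ?_ ?_ ?_ ?_
      · rintro t ht
        rcases Set.mem_insert_iff.1 ht with rfl | ht'
        · exact hSX haS
        · exact hD'X ht'
      · rintro t ht
        rcases Set.mem_insert_iff.1 ht with rfl | ht'
        · exact hSX hbS
        · exact hD2X ht'
      · rintro t (rfl : t = c)
        exact hSX hcS
      · refine Set.disjoint_left.2 fun t ht htD => ?_
        rcases Set.mem_insert_iff.1 ht with rfl | ht'
        · exact (Set.disjoint_left.1 (hfacts D hD).2.1 htD) haS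
        · exact (Set.disjoint_left.1 hDD' ht') htD
      · refine Set.disjoint_left.2 fun t ht htD => ?_
        rcases Set.mem_insert_iff.1 ht with rfl | ht'
        · exact (Set.disjoint_left.1 (hfacts D hD).2.1 htD) hbS
        · exact (Set.disjoint_left.1 (hdisjP D2 hD2P D hD hD2D) ht') htD
      · refine Set.disjoint_left.2 fun t (ht : t = c) htD => ?_
        rw [ht] at htD
        exact (Set.disjoint_left.1 (hfacts D hD).2.1 htD) hcS
      · exact hD'conn.insert_adj hua huaa.symm
      · exact hD2conn.insert_adj hub2 hub2b.symm
      · exact connOn_singleton c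
      · refine Set.disjoint_left.2 fun t ht ht' => ?_
        rcases Set.mem_insert_iff.1 ht with rfl | h1
        · rcases Set.mem_insert_iff.1 ht' with h2 | h2
          · exact hab h2
          · exact (Set.disjoint_left.1 hD2S h2) haS
        · rcases Set.mem_insert_iff.1 ht' with h2 | h2
          · exact (Set.disjoint_left.1 hD'S h1) (h2 ▸ hbS)
          · exact (Set.disjoint_left.1 hD'D2 h1) h2
      · refine Set.disjoint_left.2 fun t ht (ht' : t = c) => ?_
        rcases Set.mem_insert_iff.1 ht with rfl | h1
        · exact hac ht'
        · exact (Set.disjoint_left.1 hD'S h1) (ht' ▸ hcS)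
      · refine Set.disjoint_left.2 fun t ht (ht' : t = c) => ?_
        rcases Set.mem_insert_iff.1 ht with rfl | h1
        · exact hbc ht'
        · exact (Set.disjoint_left.1 hD2S h1) (ht' ▸ hcS)
      · exact ⟨ub1, Or.inr hub1, b, Set.mem_insert _ _, hub1b⟩
      · exact ⟨uc1, Or.inr huc1, c, rfl, huc1c⟩
      · exact ⟨uc2, Or.inr huc2, c, rfl, huc2c⟩
    · -- exactly two components : rooted K3
      push_neg at hm3
      have hall2 : ∀ D'' ∈ Pset, D'' = D ∨ D'' = D' := by
        intro D'' hD''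
        by_cases h1 : D'' = D
        · exact Or.inl h1
        · exact Or.inr (hm3 D'' hD'' h1)
      have hD'2 : 2 ≤ D'.ncard := by
        obtain ⟨hY2, hZ2⟩ := hbig h3
        have hcases : (Cy = D ∧ Cz = D') ∨ (Cy = D' ∧ Cz = D) := by
          rcases hall2 Cy hCyP with h1 | h1 <;> rcases hall2 Cz hCzP with h2 | h2
          · exact absurd (h1.trans h2.symm) hCyCz
          · exact Or.inl ⟨h1, h2⟩
          · exact Or.inr ⟨h1, h2⟩
          · exact absurd (h1.trans h2.symm) hCyCz
        rcases hcases with ⟨h1, h2⟩ | ⟨h1, h2⟩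
        · have hZCz : Z ⊆ Cz := by
            intro w hw
            have hwX : w ∈ X := hZX hw
            have hwS : w ∉ S := fun h => (Set.disjoint_right.1 hsep.2.2.2.1 hw) h
            have hwP : compOf (regG G X) S w ∈ Pset := ⟨w, ⟨hwX, hwS⟩, rfl⟩
            have hwZ : compOf (regG G X) S w ⊆ Z := comp_subset_side hsep.swap hw
            rcases hall2 _ hwP with h3' | h3'
            · exfalso
              have hy0Z : y0 ∈ Z := hwZ (by rw [h3', ← h1]; exact mem_compOf_self hy0S)
              exact (Set.disjoint_left.1 hsep.2.2.1 hy0) hy0Z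
            · rw [← h2] at h3'
              exact h3' ▸ mem_compOf_self hwS
          calc 2 ≤ Z.ncard := hZ2
          _ ≤ Cz.ncard := Set.ncard_le_ncard hZCz (Set.toFinite _)
          _ = D'.ncard := by rw [h2]
        · have hYCy : Y ⊆ Cy := by
            intro w hw
            have hwX : w ∈ X := hYX hw
            have hwS : w ∉ S := fun h => (Set.disjoint_left.1 hsep.2.1 hw) h
            have hwP : compOf (regG G X) S w ∈ Pset := ⟨w, ⟨hwX, hwS⟩, rfl⟩
            have hwY : compOf (regG G X) S w ⊆ Y := comp_subset_side hsep hw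
            rcases hall2 _ hwP with h3' | h3'
            · exfalso
              have hz0Y : z0 ∈ Y := hwY (by rw [h3', ← h2]; exact mem_compOf_self hz0S)
              exact (Set.disjoint_left.1 hsep.2.2.1 hz0Y) hz0
            · rw [← h1] at h3'
              exact h3' ▸ mem_compOf_self hwS
          calc 2 ≤ Y.ncard := hY2
          _ ≤ Cy.ncard := Set.ncard_le_ncard hYCy (Set.toFinite _)
          _ = D'.ncard := by rw [h1]
      have hRK := rootedK3 D'.ncard (regG G X) D' a b c le_rfl hD'conn
        (fun h => (Set.disjoint_left.1 hD'S h) haS)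
        (fun h => (Set.disjoint_left.1 hD'S h) hbS)
        (fun h => (Set.disjoint_left.1 hD'S h) hcS)
        hab hac hbc
        (by obtain ⟨u, hu, hadj⟩ := hgetAdj hD'P a haS; exact ⟨u, hu, hadj.symm⟩)
        (by obtain ⟨u, hu, hadj⟩ := hgetAdj hD'P b hbS; exact ⟨u, hu, hadj.symm⟩)
        (by obtain ⟨u, hu, hadj⟩ := hgetAdj hD'P c hcS; exact ⟨u, hu, hadj.symm⟩)
        (by
          intro z hz w hadj
          by_cases hwD : w ∈ D'
          · exact Or.inl hwD
          · have h2 : w ∈ Nbhd (regG G X) D' := ⟨hwD, z, hz, hadj⟩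
            rw [hD'N, hSabc] at h2
            rcases h2 with h | h | h
            exacts [Or.inr (Or.inl h), Or.inr (Or.inr (Or.inl h)),
              Or.inr (Or.inr (Or.inr h))])
        (by
          intro E hE hEne
          have h2 := hdeg D hD D' hD'P (fun e => hD'ne e.symm) E hE hEne
          omega)
        hD'2
      obtain ⟨A1, A2, A3, hRK3⟩ := hRK
      unfold RK3 at hRK3
      obtain ⟨m1, m2, m3, su1, su2, su3, d12, d13, d23, c1, c2, c3, f12, f13, f23⟩ := hRK3
      have hsubX : ∀ {Ai : Set V} {s : V}, Ai ⊆ D' ∪ {s} → s ∈ S → Ai ⊆ X := by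
        intro Ai s hsub hs t ht
        rcases hsub ht with h | h
        · exact hD'X h
        · exact (h : t = s) ▸ hSX hs
      have hsubC : ∀ {Ai : Set V} {s : V}, Ai ⊆ D' ∪ {s} → s ∈ S → Disjoint Ai D := by
        intro Ai s hsub hs
        refine Set.disjoint_left.2 fun t ht htD => ?_
        rcases hsub ht with h | h
        · exact (Set.disjoint_left.1 hDD' h) htD
        · rw [(h : t = s)] at htD
          exact (Set.disjoint_left.1 (hfacts D hD).2.1 htD) hs
      exact Afrom3 hSX hSabc hab hac hbc m1 m2 m3
        (hsubX su1 haS) (hsubX su2 hbS) (hsubX su3 hcS)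
        (hsubC su1 haS) (hsubC su2 hbS) (hsubC su3 hcS)
        c1 c2 c3 d12 d13 d23 f12 f13 f23
  -- sub-region inclusion and separator cliques
  have hX'X : ∀ D ∈ Pset, D ∪ S ⊆ X := fun D hD =>
    Set.union_subset (hfacts D hD).1 hSX
  have hSadj : ∀ D ∈ Pset, ∀ s ∈ S, ∀ s' ∈ S, s ≠ s' → (regG G (D ∪ S)).Adj s s' := by
    intro D hD s hs s' hs' hne
    obtain ⟨D', hD'P, hD'ne⟩ := hother D hD
    obtain ⟨hD'X, hD'S, hD'conn, hD'N, hD'nem, hD'clo⟩ := hfacts D' hD'P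
    refine sClique (hX'X D hD) hD'conn ?_ ?_ hD'N hs hs' hne
    · refine Set.disjoint_left.2 fun t ht ht' => ?_
      rcases ht' with h | h
      · exact (Set.disjoint_left.1 (hdisjP D' hD'P D hD hD'ne) ht) h
      · exact (Set.disjoint_left.1 hD'S ht) h
    · exact fun u hu z hadj hzS => hD'clo u hu z hadj hzS
  -- branch packs
  have hQ : ∀ D ∈ Pset, Nonempty (Pack G (D ∪ S) (D ∪ S)) := by
    intro D hD
    obtain ⟨A, hA1, hA2, hA3, hA4, hA5, hA6⟩ := hA D hD
    have hmodel := submodel hM (hX'X D hD)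
      (fun u hu z hadj hzS => (hfacts D hD).2.2.2.2.2 u hu z hadj hzS)
      hA1 hA2 hA3 hA4 hA5 hA6
    obtain ⟨D', hD'P, hD'ne⟩ := hother D hD
    obtain ⟨w', hw'⟩ := (hfacts D' hD'P).2.2.2.2.1
    have hlt : (D ∪ S).ncard ≤ n := by
      have hss : D ∪ S ⊂ X := by
        refine ⟨hX'X D hD, fun hXsub => ?_⟩
        rcases hXsub ((hfacts D' hD'P).1 hw') with h | h
        · exact (Set.disjoint_left.1 (hdisjP D' hD'P D hD hD'ne) hw') h
        · exact (Set.disjoint_left.1 (hfacts D' hD'P).2.1 hw') h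
      have h2 := Set.ncard_lt_ncard hss (Set.toFinite _)
      omega
    exact ih (D ∪ S) _ hlt hmodel
  -- base pack : single bag S
  have hbase : Nonempty (Σ' (P : Pack G X S) (c : P.ι), P.bag c = S) := by
    obtain ⟨A, hA1, hA2, hA3, hA4, hA5, hA6⟩ := hA Cy hCyP
    have hES : (∅ : Set V) ∪ S ⊆ X := by rw [Set.empty_union]; exact hSX
    have hmodel := submodel hM hES
      (fun u hu => absurd hu (Set.notMem_empty u))
      hA1 hA2 (fun s hs => Set.disjoint_left.2 fun t ht h => (Set.notMem_empty t) h)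
      hA4 hA5 hA6
    rw [Set.empty_union] at hmodel
    have htop : torso G S = ⊤ := by
      rw [torso_eq_top_iff]
      intro u hu v hv hne
      have h2 : (regG G ((∅ : Set V) ∪ S)).Adj u v := by
        refine sClique hES (hfacts Cy hCyP).2.2.1 ?_ ?_ (hfacts Cy hCyP).2.2.2.1 hu hv hne
        · refine Set.disjoint_left.2 fun t ht ht' => ?_
          rcases ht' with h | h
          · exact Set.notMem_empty t h
          · exact (Set.disjoint_left.1 (hfacts Cy hCyP).2.1 ht) h
        · exact fun a ha z hadj hzS => (hfacts Cy hCyP).2.2.2.2.2 a ha z hadj hzS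
      rwa [Set.empty_union] at h2
    refine ⟨⟨Pack.mk PUnit inferInstance ⊥ (fun _ => S) isTree_unit (fun _ => le_rfl)
      (fun v hv => ⟨PUnit.unit, hv⟩) (fun u v _ hu hv => ⟨PUnit.unit, hu, hv⟩)
      ?_ (fun s t h => h.elim)
      (fun _ => ⟨isMinor_torso_of_RModel hmodel, Or.inr ⟨htop, by show S.ncard ≤ 4; omega⟩⟩)
      (fun W hW _ => ⟨PUnit.unit, hW⟩), PUnit.unit, rfl⟩⟩
    intro v hv
    rw [SimpleGraph.connected_iff]
    exact ⟨fun a b => by rw [Subsingleton.elim a b], ⟨⟨PUnit.unit, hv⟩⟩⟩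
  obtain ⟨P0, c0, hc0⟩ := hbase
  have fold : ∀ F : Finset (Set V), ↑F ⊆ Pset →
      Nonempty (Σ' (P' : Pack G X (S ∪ ⋃ C ∈ F, C)) (c : P'.ι), P'.bag c = S) := by
    intro F
    induction F using Finset.induction_on with
    | empty =>
        intro _
        exact ⟨⟨P0.castU (by simp), c0, hc0⟩⟩
    | @insert C F hCF ihF =>
        intro hsub
        have hCP : C ∈ Pset := hsub (Finset.mem_insert_self _ _)
        obtain ⟨⟨P', c, hc⟩⟩ := ihF (fun x hx => hsub (Finset.mem_insert_of_mem hx))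
        obtain ⟨Q⟩ := hQ C hCP
        obtain ⟨r, hr⟩ := Q.clique S (fun s hs => Or.inr hs)
          (fun s hs s' hs' hne => hSadj C hCP s hs s' hs' hne)
        have hUC : Disjoint (S ∪ ⋃ C' ∈ F, C') C := by
          refine Set.disjoint_left.2 fun t ht htC => ?_
          rcases ht with h | h
          · exact (Set.disjoint_left.1 (hfacts C hCP).2.1 htC) h
          · obtain ⟨C', hC', htC'⟩ := Set.mem_iUnion₂.1 h
            have hC'P : C' ∈ Pset := hsub (Finset.mem_insert_of_mem hC')
            have hne : C' ≠ C := fun e => hCF (e ▸ hC')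
            exact (Set.disjoint_left.1 (hdisjP C' hC'P C hCP hne) htC') htC
        refine ⟨⟨(packAttach P' c hc Q r hr hS3 hUC Set.subset_union_left
          (fun u v h hu hv => regG_conv (hX'X C hCP) h hu hv)
          (fun u v h hu => ?_)).castU ?_, Sum.inl c, hc⟩⟩
        · by_cases hvS : v ∈ S
          · exact Or.inr hvS
          · exact Or.inl ((hfacts C hCP).2.2.2.2.2 u hu v h hvS)
        · ext t
          simp only [Set.mem_union, Set.mem_iUnion, exists_prop, Finset.mem_insert]
          constructor
          · rintro ((h | ⟨C', hC', ht⟩) | h)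
            · exact Or.inl h
            · exact Or.inr ⟨C', Or.inr hC', ht⟩
            · exact Or.inr ⟨C, Or.inl rfl, h⟩
          · rintro (h | ⟨C', (rfl | hC'), ht⟩)
            · exact Or.inl (Or.inl h)
            · exact Or.inr ht
            · exact Or.inl (Or.inr ⟨C', hC', ht⟩)
  have ffin : Pset.Finite := Set.toFinite _
  obtain ⟨⟨Pf, cf, hcf⟩⟩ := fold ffin.toFinset (fun x hx => (Set.Finite.mem_toFinset _).1 hx)
  refine ⟨Pf.castU ?_⟩
  ext t
  simp only [Set.mem_union, Set.mem_iUnion, exists_prop, Set.Finite.mem_toFinset]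
  constructor
  · rintro (h | ⟨C', hC', ht⟩)
    · exact hSX h
    · exact (hfacts C' hC').1 ht
  · intro ht
    by_cases htS : t ∈ S
    · exact Or.inl htS
    · exact Or.inr ⟨compOf (regG G X) S t, ⟨t, ⟨ht, htS⟩, rfl⟩, mem_compOf_self htS⟩

end Gq


open Set
open scoped Classical

namespace Gq

variable {V : Type*}

theorem regionPack [Fintype V] (G : SimpleGraph V) :
    ∀ (n : ℕ) (X : Set V) (M : V → Set V), X.ncard ≤ n → RModel G X M →
      Nonempty (Pack G X X) := by
  intro n
  induction n with
  | zero =>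
      intro X M hn hM
      have hX0 : X = ∅ := by
        have h0 : X.ncard = 0 := by omega
        exact (Set.ncard_eq_zero (Set.toFinite X)).1 h0
      have htop : torso G X = ⊤ := by
        rw [torso_eq_top_iff]
        intro u hu
        rw [hX0] at hu
        exact absurd hu (Set.notMem_empty u)
      exact ⟨singlePack G X (isMinor_torso_of_RModel hM)
        (Or.inr ⟨htop, by rw [hX0]; simp⟩)⟩
  | succ n ih =>
      intro X M hn hM
      by_cases hq4 : Quasi4Connected (torso G X)
      · exact ⟨singlePack G X (isMinor_torso_of_RModel hM) (Or.inl hq4)⟩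
      by_cases htop : torso G X = ⊤ ∧ X.ncard ≤ 4
      · exact ⟨singlePack G X (isMinor_torso_of_RModel hM) (Or.inr htop)⟩
      have hnc : ∃ u ∈ X, ∃ v ∈ X, u ≠ v ∧ ¬ (regG G X).Adj u v := by
        by_contra h
        push_neg at h
        have htop' : torso G X = ⊤ := torso_eq_top_iff.2 h
        by_cases h4 : X.ncard ≤ 4
        · exact htop ⟨htop', h4⟩
        · exact hq4 (q4c_of_top htop' (by omega))
      obtain ⟨u0, hu0, v0, hv0, hne0, hnadj0⟩ := hnc
      have hsep0 : RSep G X {u0} (X \ {u0, v0}) {v0} := by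
        refine ⟨?_, ?_, ?_, ?_, ?_⟩
        · ext t
          constructor
          · rintro ((h | h) | h)
            · exact (h : t = u0) ▸ hu0
            · exact h.1
            · exact (h : t = v0) ▸ hv0
          · intro ht
            by_cases h1 : t = u0
            · exact Or.inl (Or.inl h1)
            by_cases h2 : t = v0
            · exact Or.inr h2
            · exact Or.inl (Or.inr ⟨ht, fun hh => hh.elim h1 h2⟩)
        · exact Set.disjoint_left.2 fun t (ht : t = u0) ht' => ht'.2 (Or.inl ht)
        · exact Set.disjoint_left.2 fun t (ht : t = u0) (ht' : t = v0) =>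
            hne0 (ht.symm.trans ht')
        · exact Set.disjoint_left.2 fun t ht (ht' : t = v0) => ht.2 (Or.inr ht')
        · intro y hy z hz hadj
          rw [(hy : y = u0), (hz : z = v0)] at hadj
          exact hnadj0 hadj
      have hne : {m | ∃ Y S Z : Set V, RSep G X Y S Z ∧ Y.Nonempty ∧ Z.Nonempty ∧
          S.ncard = m}.Nonempty :=
        ⟨_, {u0}, X \ {u0, v0}, {v0}, hsep0, ⟨u0, rfl⟩, ⟨v0, rfl⟩, rfl⟩
      obtain ⟨Y1, S1, Z1, hsep1, hY1, hZ1, hS1⟩ := Nat.sInf_mem hne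
      have hmin1 : ∀ Y' S' Z', RSep G X Y' S' Z' → Y'.Nonempty → Z'.Nonempty →
          S1.ncard ≤ S'.ncard := by
        intro Y' S' Z' h hy hz
        rw [hS1]
        exact Nat.sInf_le ⟨Y', S', Z', h, hy, hz, rfl⟩
      have hcard : S1.ncard + 2 ≤ X.ncard := by
        obtain ⟨y1, hy1⟩ := hY1
        obtain ⟨z1, hz1⟩ := hZ1
        have hy1S : y1 ∉ S1 := fun h => (Set.disjoint_left.1 hsep1.2.1 hy1) h
        have hz1S : z1 ∉ S1 := fun h => (Set.disjoint_right.1 hsep1.2.2.2.1 hz1) h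
        have hyz : y1 ≠ z1 := fun h => (Set.disjoint_left.1 hsep1.2.2.1 hy1) (h ▸ hz1)
        have hsub : insert y1 (insert z1 S1) ⊆ X := by
          intro t ht
          rcases Set.mem_insert_iff.1 ht with rfl | ht
          · exact hsep1.Y_subset hy1
          rcases Set.mem_insert_iff.1 ht with rfl | ht
          · exact hsep1.Z_subset hz1
          · exact hsep1.S_subset ht
        have h1 : (insert y1 (insert z1 S1)).ncard = S1.ncard + 2 := by
          rw [Set.ncard_insert_of_notMem (by
              intro h
              rcases Set.mem_insert_iff.1 h with h | h
              exacts [hyz h, hy1S h]) (Set.toFinite _),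
            Set.ncard_insert_of_notMem hz1S (Set.toFinite _)]
        calc S1.ncard + 2 = (insert y1 (insert z1 S1)).ncard := h1.symm
        _ ≤ X.ncard := Set.ncard_le_ncard hsub (Set.toFinite _)
      by_cases hk4 : 4 ≤ S1.ncard
      · exfalso
        apply hq4
        refine q4c_transport (by omega) ?_ ?_
        · intro Y' S' Z' h hy hz
          have := hmin1 Y' S' Z' h hy hz
          omega
        · intro Y' S' Z' h h3
          by_cases hy : Y'.Nonempty
          · by_cases hz : Z'.Nonempty
            · have := hmin1 Y' S' Z' h hy hz; omega
            · right; rw [Set.not_nonempty_iff_eq_empty.1 hz]; simp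
          · left; rw [Set.not_nonempty_iff_eq_empty.1 hy]; simp
      push_neg at hk4
      by_cases hk3 : S1.ncard = 3
      · have hmin3 : ∀ Y' S' Z', RSep G X Y' S' Z' → Y'.Nonempty → Z'.Nonempty →
            3 ≤ S'.ncard := by
          intro Y' S' Z' h hy hz
          have := hmin1 Y' S' Z' h hy hz; omega
        obtain ⟨Yb, Sb, Zb, hsepb, hSb3, hYb2, hZb2⟩ :=
          bad_sep_of_not_q4c hq4 (by omega) hmin3
        refine splitPack ih hn hM hsepb ?_ ?_ ?_ (by omega) (fun _ => ⟨hYb2, hZb2⟩)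
        · exact Set.nonempty_of_ncard_ne_zero (by omega)
        · exact Set.nonempty_of_ncard_ne_zero (by omega)
        · intro Y' S' Z' h hy hz
          have := hmin3 Y' S' Z' h hy hz
          omega
      · refine splitPack ih hn hM hsep1 hY1 hZ1 hmin1 (by omega)
          (fun h => absurd h hk3)

end Gq

/-- Every finite simple graph `G` has a tree decomposition of adhesion at
most 3 all of whose torsos are minors of `G` and are quasi-4-connected or complete
graphs on at most 4 vertices. -/
theorem statement0 {V : Type*} [Fintype V] (G : SimpleGraph V) :
    ∃ (ι : Type) (_ : Fintype ι) (T : SimpleGraph ι) (β : ι → Set V),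
      T.IsTree ∧
      (∀ v : V, ∃ t : ι, v ∈ β t) ∧
      (∀ u v : V, G.Adj u v → ∃ t : ι, u ∈ β t ∧ v ∈ β t) ∧
      (∀ v : V, (T.induce {t : ι | v ∈ β t}).Connected) ∧
      (∀ s t : ι, T.Adj s t → (β s ∩ β t).ncard ≤ 3) ∧
      (∀ t : ι, IsMinor (torso G (β t)) G ∧
        (Quasi4Connected (torso G (β t)) ∨
          (torso G (β t) = ⊤ ∧ (β t).ncard ≤ 4))) := by
  classical
  obtain ⟨P⟩ := Gq.regionPack G (Set.univ : Set V).ncard Set.univ (fun v => {v}) le_rfl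
    Gq.rmodel_trivial
  refine ⟨P.ι, P.fin, P.T, P.bag, P.tree, ?_, ?_, ?_, P.adh, P.torso_ok⟩
  · exact fun v => P.cover v trivial
  · intro u v huv
    exact P.edges u v (by rw [Gq.regG_univ]; exact huv) trivial trivial
  · exact fun v => P.conn v trivial
end

section
/- Let G be a finite simple graph, k ≥ 1, and X ⊆ V(G) a (k−1)-inseparable set with 2·|X| > 3·(k−1). Then 𝒯^k(X) := {(Y,S,Z) : (Y,S,Z) is a separation of G of order < k with X ⊆ S ∪ Z} is a G-tangle of order k. -/
variable {V : Type*} {W : Type*}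

lemma isSeparation_symm' {V : Type*} {G : SimpleGraph V} {Y S Z : Set V}
    (h : IsSeparation G Y S Z) : IsSeparation G Z S Y := by
  obtain ⟨hYS, hYZ, hSZ, huniv, hadj⟩ := h
  refine ⟨hSZ.symm, hYZ.symm, hYS.symm, ?_, fun z hz y hy hA => hadj y hy z hz hA.symm⟩
  rw [← huniv]; ext v
  simp only [Set.mem_union]; tauto

lemma key_aux {V : Type*} [Fintype V] (G : SimpleGraph V) (k : ℕ)
    (X Y S Z : Set V) (hins : KInseparable G (k - 1) X)
    (hsep : IsSeparation G Y S Z) (hS : S.ncard < k) (hXsub : X ⊆ S ∪ Z)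
    (x : V) (hxX : x ∈ X) (hxS : x ∈ S) (hnb : ∀ v ∈ Z, ¬ G.Adj x v) : False := by
  obtain ⟨hYS, hYZ, hSZ, huniv, hadj⟩ := hsep
  have hsep' : IsSeparation G (Y ∪ {x}) (S \ {x}) Z := by
    refine ⟨?_, ?_, ?_, ?_, ?_⟩
    · rw [Set.disjoint_union_left]
      exact ⟨hYS.mono_right Set.diff_subset, by simp⟩
    · rw [Set.disjoint_union_left]
      exact ⟨hYZ, Set.disjoint_singleton_left.mpr (Set.disjoint_left.mp hSZ hxS)⟩
    · exact hSZ.mono_left Set.diff_subset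
    · ext v
      simp only [Set.mem_union, Set.mem_diff, Set.mem_singleton_iff, Set.mem_univ,
        iff_true]
      have hv : v ∈ Y ∪ S ∪ Z := huniv ▸ Set.mem_univ v
      simp only [Set.mem_union] at hv
      by_cases hvx : v = x <;> tauto
    · intro y hy z hz
      rcases hy with hy | hy
      · exact hadj y hy z hz
      · rw [Set.mem_singleton_iff] at hy; subst hy; exact hnb z hz
  have hord : (S \ {x}).ncard ≤ k - 1 :=
    le_trans (Set.ncard_le_ncard Set.diff_subset S.toFinite) (by omega)
  by_cases hXZ : (X ∩ Z).Nonempty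
  · exact hins.2 ⟨Y ∪ {x}, S \ {x}, Z, hsep', hord, ⟨x, hxX, Or.inr rfl⟩, hXZ⟩
  · have hXS : X ⊆ S := fun a ha =>
      (hXsub ha).resolve_right (fun h => hXZ ⟨a, ha, h⟩)
    have h1 := Set.ncard_le_ncard hXS S.toFinite
    have h2 := hins.1
    omega

/-- a (k−1)-inseparable set X with 2|X| > 3(k−1) induces the tangle
𝒯ᵏ(X) of order k. -/
theorem statement4 {V : Type*} [Fintype V] (G : SimpleGraph V) (k : ℕ) (hk : 1 ≤ k)
    (X : Set V) (hins : KInseparable G (k - 1) X)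
    (hcard : 3 * (k - 1) < 2 * X.ncard) :
    IsTangle G k {p : Set V × Set V × Set V |
      IsSeparation G p.1 p.2.1 p.2.2 ∧ p.2.1.ncard < k ∧ X ⊆ p.2.1 ∪ p.2.2} := by
  constructor
  · exact fun p hp => ⟨hp.1, hp.2.1⟩
  constructor
  · intro Y S Z hsep hord
    by_cases hXY : (X ∩ Y).Nonempty
    · by_cases hXZ : (X ∩ Z).Nonempty
      · exact absurd ⟨Y, S, Z, hsep, by omega, hXY, hXZ⟩ hins.2
      · have hXsub : X ⊆ S ∪ Y := by
          intro a ha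
          have hv : a ∈ Y ∪ S ∪ Z := hsep.2.2.2.1 ▸ Set.mem_univ a
          rcases hv with (hv | hv) | hv
          · exact Or.inr hv
          · exact Or.inl hv
          · exact absurd ⟨a, ha, hv⟩ hXZ
        exact Or.inr ⟨isSeparation_symm' hsep, hord, hXsub⟩
    · have hXsub : X ⊆ S ∪ Z := by
        intro a ha
        have hv : a ∈ Y ∪ S ∪ Z := hsep.2.2.2.1 ▸ Set.mem_univ a
        rcases hv with (hv | hv) | hv
        · exact absurd ⟨a, ha, hv⟩ hXY
        · exact Or.inl hv
        · exact Or.inr hv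
      exact Or.inl ⟨hsep, hord, hXsub⟩
  constructor
  · rintro ⟨Y₁, S₁, Z₁⟩ ⟨hsep₁, hord₁, hsub₁⟩ ⟨Y₂, S₂, Z₂⟩ ⟨hsep₂, hord₂, hsub₂⟩
      ⟨Y₃, S₃, Z₃⟩ ⟨hsep₃, hord₃, hsub₃⟩
    by_contra hcon
    rw [not_or] at hcon
    simp only at hcon hsub₁ hsub₂ hsub₃ hsep₁ hsep₂ hsep₃ hord₁ hord₂ hord₃ ⊢
    have htwo : ∀ x ∈ X, (x ∈ S₁ ∧ x ∈ S₂) ∨ (x ∈ S₁ ∧ x ∈ S₃) ∨ (x ∈ S₂ ∧ x ∈ S₃) := by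
      intro x hx
      have h1 : x ∈ S₁ ∨ x ∈ Z₁ := hsub₁ hx
      have h2 : x ∈ S₂ ∨ x ∈ Z₂ := hsub₂ hx
      have h3 : x ∈ S₃ ∨ x ∈ Z₃ := hsub₃ hx
      rcases h1 with h1 | h1 <;> rcases h2 with h2 | h2 <;> rcases h3 with h3 | h3
      · exact Or.inl ⟨h1, h2⟩
      · exact Or.inl ⟨h1, h2⟩
      · exact Or.inr (Or.inl ⟨h1, h3⟩)
      · exact absurd (key_aux G k X Y₁ S₁ Z₁ hins hsep₁ hord₁ hsub₁ x hx h1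
          (fun v hv hadj => hcon.2 ⟨x, v, hadj, Or.inr hv, Or.inl h2, Or.inl h3⟩)) not_false
      · exact Or.inr (Or.inr ⟨h2, h3⟩)
      · exact absurd (key_aux G k X Y₂ S₂ Z₂ hins hsep₂ hord₂ hsub₂ x hx h2
          (fun v hv hadj => hcon.2 ⟨x, v, hadj, Or.inl h1, Or.inr hv, Or.inl h3⟩)) not_false
      · exact absurd (key_aux G k X Y₃ S₃ Z₃ hins hsep₃ hord₃ hsub₃ x hx h3
          (fun v hv hadj => hcon.2 ⟨x, v, hadj, Or.inl h1, Or.inl h2, Or.inr hv⟩)) not_false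
      · exact absurd ⟨x, ⟨h1, h2⟩, h3⟩ hcon.1
    have hAB : X ⊆ (X ∩ S₁) ∪ (X ∩ S₂) := by
      intro x hx
      rcases htwo x hx with ⟨h, _⟩ | ⟨h, _⟩ | ⟨h, _⟩
      exacts [Or.inl ⟨hx, h⟩, Or.inl ⟨hx, h⟩, Or.inr ⟨hx, h⟩]
    have hABC : X ⊆ ((X ∩ S₁) ∩ (X ∩ S₂)) ∪ (X ∩ S₃) := by
      intro x hx
      rcases htwo x hx with ⟨h1, h2⟩ | ⟨_, h3⟩ | ⟨_, h3⟩
      exacts [Or.inl ⟨⟨hx, h1⟩, ⟨hx, h2⟩⟩, Or.inr ⟨hx, h3⟩, Or.inr ⟨hx, h3⟩]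
    have e1 : ((X ∩ S₁) ∪ (X ∩ S₂)).ncard + ((X ∩ S₁) ∩ (X ∩ S₂)).ncard
        = (X ∩ S₁).ncard + (X ∩ S₂).ncard :=
      Set.ncard_union_add_ncard_inter _ _ (Set.toFinite _) (Set.toFinite _)
    have e2 : (((X ∩ S₁) ∩ (X ∩ S₂)) ∪ (X ∩ S₃)).ncard
        ≤ ((X ∩ S₁) ∩ (X ∩ S₂)).ncard + (X ∩ S₃).ncard :=
      Set.ncard_union_le _ _
    have l1 : X.ncard ≤ ((X ∩ S₁) ∪ (X ∩ S₂)).ncard :=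
      Set.ncard_le_ncard hAB (Set.toFinite _)
    have l2 : X.ncard ≤ (((X ∩ S₁) ∩ (X ∩ S₂)) ∪ (X ∩ S₃)).ncard :=
      Set.ncard_le_ncard hABC (Set.toFinite _)
    have b1 : (X ∩ S₁).ncard ≤ S₁.ncard :=
      Set.ncard_le_ncard Set.inter_subset_right (Set.toFinite _)
    have b2 : (X ∩ S₂).ncard ≤ S₂.ncard :=
      Set.ncard_le_ncard Set.inter_subset_right (Set.toFinite _)
    have b3 : (X ∩ S₃).ncard ≤ S₃.ncard :=
      Set.ncard_le_ncard Set.inter_subset_right (Set.toFinite _)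
    omega
  · rintro ⟨Y, S, Z⟩ ⟨hsep, hord, hsub⟩
    simp only at hsub hord ⊢
    by_contra hZ
    rw [Set.not_nonempty_iff_eq_empty] at hZ
    subst hZ
    have hXS : X ⊆ S := fun a ha => (hsub ha).resolve_right (fun h => h)
    have h1 := Set.ncard_le_ncard hXS S.toFinite
    have h2 := hins.1
    omega
end

section
/- Let G be a finite simple graph, 𝒯 a G-tangle of order k, and let (Y₁,S₁,Z₁), (Y₂,S₂,Z₂) ∈ 𝒯_min be distinct. Then |(S₁ ∩ Z₂) ∪ (S₁ ∩ S₂) ∪ (Z₁ ∩ S₂)| ≥ k, and moreover S₁ ∩ Z₂ ≠ ∅ and S₂ ∩ Z₁ ≠ ∅. -/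
variable {V : Type*} {W : Type*}

private lemma sep_cover' {V : Type*} {G : SimpleGraph V} {Y S Z : Set V}
    (h : IsSeparation G Y S Z) (v : V) : v ∈ Y ∨ v ∈ S ∨ v ∈ Z := by
  have hv : v ∈ Y ∪ S ∪ Z := h.2.2.2.1 ▸ Set.mem_univ v
  simpa [or_assoc] using hv

private lemma corner_sep' {V : Type*} {G : SimpleGraph V} {Y₁ S₁ Z₁ Y₂ S₂ Z₂ : Set V}
    (sep₁ : IsSeparation G Y₁ S₁ Z₁) (sep₂ : IsSeparation G Y₂ S₂ Z₂) :
    IsSeparation G (Y₁ ∪ Y₂) ((S₁ ∩ Z₂) ∪ (S₁ ∩ S₂) ∪ (Z₁ ∩ S₂)) (Z₁ ∩ Z₂) := by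
  have c1 := sep_cover' sep₁
  have c2 := sep_cover' sep₂
  obtain ⟨d1a, d1b, d1c, -, na1⟩ := sep₁
  obtain ⟨d2a, d2b, d2c, -, na2⟩ := sep₂
  rw [Set.disjoint_left] at d1a d1b d1c d2a d2b d2c
  refine ⟨?_, ?_, ?_, ?_, ?_⟩
  · rw [Set.disjoint_left]
    intro a ha hb
    simp only [Set.mem_union, Set.mem_inter_iff] at ha hb
    have e1 : a ∈ Y₁ → a ∉ S₁ := fun h => d1a h
    have e2 : a ∈ Y₁ → a ∉ Z₁ := fun h => d1b h
    have e4 : a ∈ Y₂ → a ∉ S₂ := fun h => d2a h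
    have e5 : a ∈ Y₂ → a ∉ Z₂ := fun h => d2b h
    tauto
  · rw [Set.disjoint_left]
    intro a ha hb
    simp only [Set.mem_union, Set.mem_inter_iff] at ha hb
    have e2 : a ∈ Y₁ → a ∉ Z₁ := fun h => d1b h
    have e5 : a ∈ Y₂ → a ∉ Z₂ := fun h => d2b h
    tauto
  · rw [Set.disjoint_left]
    intro a ha hb
    simp only [Set.mem_union, Set.mem_inter_iff] at ha hb
    have e3 : a ∈ S₁ → a ∉ Z₁ := fun h => d1c h
    have e6 : a ∈ S₂ → a ∉ Z₂ := fun h => d2c h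
    tauto
  · rw [Set.eq_univ_iff_forall]
    intro v
    simp only [Set.mem_union, Set.mem_inter_iff]
    have := c1 v
    have := c2 v
    tauto
  · intro y hy z hz hadj
    rcases hy with hy | hy
    · exact na1 y hy z hz.1 hadj
    · exact na2 y hy z hz.2 hadj

private lemma corner_mem' {V : Type*} {G : SimpleGraph V} {k : ℕ}
    {T : Set (Set V × Set V × Set V)} (hT : IsTangle G k T)
    {Y₁ S₁ Z₁ Y₂ S₂ Z₂ : Set V}
    (hp₁ : (Y₁, S₁, Z₁) ∈ T) (hp₂ : (Y₂, S₂, Z₂) ∈ T)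
    {A S B : Set V} (hsep : IsSeparation G A S B) (hS : S.ncard < k)
    (hA : A ⊆ Y₁ ∪ Y₂) : (A, S, B) ∈ T := by
  have sep₁ : IsSeparation G Y₁ S₁ Z₁ := (hT.1 _ hp₁).1
  have sep₂ : IsSeparation G Y₂ S₂ Z₂ := (hT.1 _ hp₂).1
  rcases hT.2.1 A S B hsep hS with h | h
  · exact h
  exfalso
  rcases hT.2.2.1 _ hp₁ _ hp₂ _ h with ⟨x, hx⟩ | ⟨u, v, huv, h1, h2, h3⟩
  · obtain ⟨⟨hx1, hx2⟩, hxA⟩ := hx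
    rcases hA hxA with hY | hY
    · exact Set.disjoint_left.mp sep₁.2.1 hY hx1
    · exact Set.disjoint_left.mp sep₂.2.1 hY hx2
  · have key : ∀ w x : V, G.Adj w x → w ∈ A → (w ∈ Z₁ ∨ x ∈ Z₁) →
        (w ∈ Z₂ ∨ x ∈ Z₂) → False := by
      intro w x hadj hwA hz1 hz2
      rcases hA hwA with hY | hY
      · have hx1 : x ∈ Z₁ := by
          rcases hz1 with h' | h'
          · exact absurd h' (Set.disjoint_left.mp sep₁.2.1 hY)
          · exact h'
        exact sep₁.2.2.2.2 w hY x hx1 hadj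
      · have hx2 : x ∈ Z₂ := by
          rcases hz2 with h' | h'
          · exact absurd h' (Set.disjoint_left.mp sep₂.2.1 hY)
          · exact h'
        exact sep₂.2.2.2.2 w hY x hx2 hadj
    rcases h3 with hA' | hA'
    · exact key u v huv hA' h1 h2
    · exact key v u huv.symm hA' h1.symm h2.symm

/-- distinct minimal elements of a tangle of order k satisfy
|(S₁ ∩ Z₂) ∪ (S₁ ∩ S₂) ∪ (Z₁ ∩ S₂)| ≥ k, S₁ ∩ Z₂ ≠ ∅ and S₂ ∩ Z₁ ≠ ∅. -/
theorem statement5 {V : Type*} [Fintype V] (G : SimpleGraph V) (k : ℕ)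
    (T : Set (Set V × Set V × Set V)) (hT : IsTangle G k T)
    (Y₁ S₁ Z₁ Y₂ S₂ Z₂ : Set V)
    (h₁ : IsMinimalIn T (Y₁, S₁, Z₁)) (h₂ : IsMinimalIn T (Y₂, S₂, Z₂))
    (hne : (Y₁, S₁, Z₁) ≠ (Y₂, S₂, Z₂)) :
    k ≤ ((S₁ ∩ Z₂) ∪ (S₁ ∩ S₂) ∪ (Z₁ ∩ S₂)).ncard ∧
      (S₁ ∩ Z₂).Nonempty ∧ (S₂ ∩ Z₁).Nonempty := by
  obtain ⟨hp₁, min₁⟩ := h₁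
  obtain ⟨hp₂, min₂⟩ := h₂
  have sep₁ : IsSeparation G Y₁ S₁ Z₁ := (hT.1 _ hp₁).1
  have ord₁ : S₁.ncard < k := (hT.1 _ hp₁).2
  have sep₂ : IsSeparation G Y₂ S₂ Z₂ := (hT.1 _ hp₂).1
  have ord₂ : S₂.ncard < k := (hT.1 _ hp₂).2
  have c1 := sep_cover' sep₁
  have c2 := sep_cover' sep₂
  have csep : IsSeparation G (Y₁ ∪ Y₂) ((S₁ ∩ Z₂) ∪ (S₁ ∩ S₂) ∪ (Z₁ ∩ S₂)) (Z₁ ∩ Z₂) :=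
    corner_sep' sep₁ sep₂
  -- Part 1 : (S₁ ∩ Z₂).Nonempty
  have hne₁ : (S₁ ∩ Z₂).Nonempty := by
    rw [Set.nonempty_iff_ne_empty]
    intro hemp
    have hemp' : ∀ v : V, v ∈ S₁ → v ∉ Z₂ := fun v h1 h2 =>
      Set.eq_empty_iff_forall_notMem.mp hemp v ⟨h1, h2⟩
    have hS'sub : (S₁ ∩ Z₂) ∪ (S₁ ∩ S₂) ∪ (Z₁ ∩ S₂) ⊆ S₂ := by
      intro v hv
      rcases hv with (hv | hv) | hv
      · exact absurd hv.2 (hemp' v hv.1)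
      · exact hv.2
      · exact hv.2
    have hmem : (Y₁ ∪ Y₂, (S₁ ∩ Z₂) ∪ (S₁ ∩ S₂) ∪ (Z₁ ∩ S₂), Z₁ ∩ Z₂) ∈ T :=
      corner_mem' hT hp₁ hp₂ csep
        ((Set.ncard_le_ncard hS'sub (Set.toFinite _)).trans_lt ord₂) (subset_refl _)
    have hsub : ((S₁ ∩ Z₂) ∪ (S₁ ∩ S₂) ∪ (Z₁ ∩ S₂)) ∪ (Z₁ ∩ Z₂) ⊆ S₂ ∪ Z₂ :=
      Set.union_subset (hS'sub.trans Set.subset_union_left)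
        (Set.inter_subset_right.trans Set.subset_union_right)
    have hle : SepLE (Y₁ ∪ Y₂, (S₁ ∩ Z₂) ∪ (S₁ ∩ S₂) ∪ (Z₁ ∩ S₂), Z₁ ∩ Z₂) (Y₂, S₂, Z₂) := by
      rcases eq_or_ne (((S₁ ∩ Z₂) ∪ (S₁ ∩ S₂) ∪ (Z₁ ∩ S₂)) ∪ (Z₁ ∩ Z₂)) (S₂ ∪ Z₂) with he | hne'
      · exact Or.inr ⟨he, hS'sub⟩
      · exact Or.inl (hsub.ssubset_of_ne hne')
    have heq := min₂ _ hmem hle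
    simp only [Prod.mk.injEq] at heq
    obtain ⟨hYeq, _, hZeq⟩ := heq
    have hY12 : Y₁ ⊆ Y₂ := by rw [← hYeq]; exact Set.subset_union_left
    have hZ21 : Z₂ ⊆ Z₁ := by
      intro v hv
      have hv' : v ∈ Z₁ ∩ Z₂ := by rw [hZeq]; exact hv
      exact hv'.1
    have hsub2 : S₂ ∪ Z₂ ⊆ S₁ ∪ Z₁ := by
      intro v hv
      rcases hv with hv | hv
      · rcases c1 v with h | h | h
        · exact absurd hv (Set.disjoint_left.mp sep₂.1 (hY12 h))
        · exact Or.inl h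
        · exact Or.inr h
      · exact Or.inr (hZ21 hv)
    rcases eq_or_ne (S₂ ∪ Z₂) (S₁ ∪ Z₁) with he | hne'
    · have hS12 : S₁ ⊆ S₂ := by
        intro v hv
        have hv' : v ∈ S₂ ∪ Z₂ := by rw [he]; exact Or.inl hv
        rcases hv' with h | h
        · exact h
        · exact absurd h (hemp' v hv)
      exact hne (min₂ _ hp₁ (Or.inr ⟨he.symm, hS12⟩))
    · exact hne (min₁ _ hp₂ (Or.inl (hsub2.ssubset_of_ne hne'))).symm
  -- Part 2 : (S₂ ∩ Z₁).Nonempty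
  have hne₂ : (S₂ ∩ Z₁).Nonempty := by
    rw [Set.nonempty_iff_ne_empty]
    intro hemp
    have hemp' : ∀ v : V, v ∈ S₂ → v ∉ Z₁ := fun v h1 h2 =>
      Set.eq_empty_iff_forall_notMem.mp hemp v ⟨h1, h2⟩
    have hS'sub : (S₁ ∩ Z₂) ∪ (S₁ ∩ S₂) ∪ (Z₁ ∩ S₂) ⊆ S₁ := by
      intro v hv
      rcases hv with (hv | hv) | hv
      · exact hv.1
      · exact hv.1
      · exact absurd hv.1 (hemp' v hv.2)
    have hmem : (Y₁ ∪ Y₂, (S₁ ∩ Z₂) ∪ (S₁ ∩ S₂) ∪ (Z₁ ∩ S₂), Z₁ ∩ Z₂) ∈ T :=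
      corner_mem' hT hp₁ hp₂ csep
        ((Set.ncard_le_ncard hS'sub (Set.toFinite _)).trans_lt ord₁) (subset_refl _)
    have hsub : ((S₁ ∩ Z₂) ∪ (S₁ ∩ S₂) ∪ (Z₁ ∩ S₂)) ∪ (Z₁ ∩ Z₂) ⊆ S₁ ∪ Z₁ :=
      Set.union_subset (hS'sub.trans Set.subset_union_left)
        (Set.inter_subset_left.trans Set.subset_union_right)
    have hle : SepLE (Y₁ ∪ Y₂, (S₁ ∩ Z₂) ∪ (S₁ ∩ S₂) ∪ (Z₁ ∩ S₂), Z₁ ∩ Z₂) (Y₁, S₁, Z₁) := by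
      rcases eq_or_ne (((S₁ ∩ Z₂) ∪ (S₁ ∩ S₂) ∪ (Z₁ ∩ S₂)) ∪ (Z₁ ∩ Z₂)) (S₁ ∪ Z₁) with he | hne'
      · exact Or.inr ⟨he, hS'sub⟩
      · exact Or.inl (hsub.ssubset_of_ne hne')
    have heq := min₁ _ hmem hle
    simp only [Prod.mk.injEq] at heq
    obtain ⟨hYeq, _, hZeq⟩ := heq
    have hY21 : Y₂ ⊆ Y₁ := by rw [← hYeq]; exact Set.subset_union_right
    have hZ12 : Z₁ ⊆ Z₂ := by
      intro v hv
      have hv' : v ∈ Z₁ ∩ Z₂ := by rw [hZeq]; exact hv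
      exact hv'.2
    have hsub2 : S₁ ∪ Z₁ ⊆ S₂ ∪ Z₂ := by
      intro v hv
      rcases hv with hv | hv
      · rcases c2 v with h | h | h
        · exact absurd hv (Set.disjoint_left.mp sep₁.1 (hY21 h))
        · exact Or.inl h
        · exact Or.inr h
      · exact Or.inr (hZ12 hv)
    rcases eq_or_ne (S₁ ∪ Z₁) (S₂ ∪ Z₂) with he | hne'
    · have hS21 : S₂ ⊆ S₁ := by
        intro v hv
        have hv' : v ∈ S₁ ∪ Z₁ := by rw [he]; exact Or.inl hv
        rcases hv' with h | h
        · exact h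
        · exact absurd h (hemp' v hv)
      exact hne (min₁ _ hp₂ (Or.inr ⟨he.symm, hS21⟩)).symm
    · exact hne (min₂ _ hp₁ (Or.inl (hsub2.ssubset_of_ne hne')))
  -- Part 3 : cardinality
  have hcard : k ≤ ((S₁ ∩ Z₂) ∪ (S₁ ∩ S₂) ∪ (Z₁ ∩ S₂)).ncard := by
    by_contra hlt
    push_neg at hlt
    have hmem : (Y₁ ∪ Y₂, (S₁ ∩ Z₂) ∪ (S₁ ∩ S₂) ∪ (Z₁ ∩ S₂), Z₁ ∩ Z₂) ∈ T :=
      corner_mem' hT hp₁ hp₂ csep hlt (subset_refl _)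
    have hsub1 : ((S₁ ∩ Z₂) ∪ (S₁ ∩ S₂) ∪ (Z₁ ∩ S₂)) ∪ (Z₁ ∩ Z₂) ⊆ S₁ ∪ Z₁ := by
      intro v hv
      simp only [Set.mem_union, Set.mem_inter_iff] at hv ⊢
      tauto
    have hsub2 : ((S₁ ∩ Z₂) ∪ (S₁ ∩ S₂) ∪ (Z₁ ∩ S₂)) ∪ (Z₁ ∩ Z₂) ⊆ S₂ ∪ Z₂ := by
      intro v hv
      simp only [Set.mem_union, Set.mem_inter_iff] at hv ⊢
      tauto
    rcases eq_or_ne (((S₁ ∩ Z₂) ∪ (S₁ ∩ S₂) ∪ (Z₁ ∩ S₂)) ∪ (Z₁ ∩ Z₂)) (S₁ ∪ Z₁) with he1 | hne1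
    swap
    · have heq := min₁ _ hmem (Or.inl (hsub1.ssubset_of_ne hne1))
      simp only [Prod.mk.injEq] at heq
      exact hne1 (by rw [heq.2.1, heq.2.2])
    rcases eq_or_ne (((S₁ ∩ Z₂) ∪ (S₁ ∩ S₂) ∪ (Z₁ ∩ S₂)) ∪ (Z₁ ∩ Z₂)) (S₂ ∪ Z₂) with he2 | hne2
    swap
    · have heq := min₂ _ hmem (Or.inl (hsub2.ssubset_of_ne hne2))
      simp only [Prod.mk.injEq] at heq
      exact hne2 (by rw [heq.2.1, heq.2.2])
    have hU : S₁ ∪ Z₁ = S₂ ∪ Z₂ := he1.symm.trans he2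
    have hYY : Y₂ = Y₁ := by
      apply Set.Subset.antisymm
      · intro v hv
        rcases c1 v with h | h | h
        · exact h
        · have : v ∈ S₂ ∪ Z₂ := hU ▸ (Or.inl h : v ∈ S₁ ∪ Z₁)
          rcases this with h' | h'
          · exact absurd h' (Set.disjoint_left.mp sep₂.1 hv)
          · exact absurd h' (Set.disjoint_left.mp sep₂.2.1 hv)
        · have : v ∈ S₂ ∪ Z₂ := hU ▸ (Or.inr h : v ∈ S₁ ∪ Z₁)
          rcases this with h' | h'
          · exact absurd h' (Set.disjoint_left.mp sep₂.1 hv)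
          · exact absurd h' (Set.disjoint_left.mp sep₂.2.1 hv)
      · intro v hv
        rcases c2 v with h | h | h
        · exact h
        · have : v ∈ S₁ ∪ Z₁ := hU.symm ▸ (Or.inl h : v ∈ S₂ ∪ Z₂)
          rcases this with h' | h'
          · exact absurd h' (Set.disjoint_left.mp sep₁.1 hv)
          · exact absurd h' (Set.disjoint_left.mp sep₁.2.1 hv)
        · have : v ∈ S₁ ∪ Z₁ := hU.symm ▸ (Or.inr h : v ∈ S₂ ∪ Z₂)
          rcases this with h' | h'
          · exact absurd h' (Set.disjoint_left.mp sep₁.1 hv)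
          · exact absurd h' (Set.disjoint_left.mp sep₁.2.1 hv)
    have usep : IsSeparation G Y₁ (S₁ ∩ S₂) (Z₁ ∪ Z₂) := by
      refine ⟨?_, ?_, ?_, ?_, ?_⟩
      · exact Set.disjoint_left.mpr fun a ha hb =>
          Set.disjoint_left.mp sep₁.1 ha hb.1
      · rw [Set.disjoint_left]
        intro a ha hb
        rcases hb with hb | hb
        · exact Set.disjoint_left.mp sep₁.2.1 ha hb
        · exact Set.disjoint_left.mp sep₂.2.1 (hYY ▸ ha) hb
      · rw [Set.disjoint_left]
        intro a ha hb
        rcases hb with hb | hb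
        · exact Set.disjoint_left.mp sep₁.2.2.1 ha.1 hb
        · exact Set.disjoint_left.mp sep₂.2.2.1 ha.2 hb
      · rw [Set.eq_univ_iff_forall]
        intro v
        simp only [Set.mem_union, Set.mem_inter_iff]
        have h1 := c1 v
        have h2 := c2 v
        have hy : v ∈ Y₂ → v ∈ Y₁ := fun h => hYY ▸ h
        tauto
      · intro y hy z hz hadj
        rcases hz with hz | hz
        · exact sep₁.2.2.2.2 y hy z hz hadj
        · exact sep₂.2.2.2.2 y (hYY ▸ hy) z hz hadj
    have humem : (Y₁, S₁ ∩ S₂, Z₁ ∪ Z₂) ∈ T :=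
      corner_mem' hT hp₁ hp₂ usep
        ((Set.ncard_le_ncard Set.inter_subset_left (Set.toFinite _)).trans_lt ord₁)
        Set.subset_union_left
    have hUeq : (S₁ ∩ S₂) ∪ (Z₁ ∪ Z₂) = S₁ ∪ Z₁ := by
      apply Set.Subset.antisymm
      · intro v hv
        rcases hv with hv | hv | hv
        · exact Or.inl hv.1
        · exact Or.inr hv
        · exact hU ▸ (Or.inr hv : v ∈ S₂ ∪ Z₂)
      · intro v hv
        rcases hv with hv | hv
        · have : v ∈ S₂ ∪ Z₂ := hU ▸ (Or.inl hv : v ∈ S₁ ∪ Z₁)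
          rcases this with h | h
          · exact Or.inl ⟨hv, h⟩
          · exact Or.inr (Or.inr h)
        · exact Or.inr (Or.inl hv)
    have e1 := min₁ _ humem (Or.inr ⟨hUeq, Set.inter_subset_left⟩)
    have e2 := min₂ _ humem (by
      refine Or.inr ⟨hUeq.trans hU, Set.inter_subset_right⟩)
    exact hne (e1.symm.trans e2)
  exact ⟨hcard, hne₁, hne₂⟩
end
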